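/- arXiv:1910.14476 — 3 statements merged into one kernel-verified Lean document; each statement's English description precedes it below -/
import Mathlib

section
/- Let d ≥ 2. There exists a constant C_d > 0 depending only on d such that for every β > 0, every q₂ ∈ (−d, 1], and every v ∈ ℝ^d, one has ∫_{ℝ^d} |v₁ − v|^{q₂} e^{−β|v₁|²} dv₁ ≤ C_d [ (1 + β^{−d/2} + β^{−(d+1)/2}) if q₂ > 0, and (β^{−d/2} + 1/(d+q₂)) if q₂ ≤ 0 ] · (1 + |v|^{q₂⁺}), where q₂⁺ = max{0, q₂}. -/
open MeasureTheory Metric Set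
open scoped ENNReal

section Aux

variable {d : ℕ}

private lemma real_rpow_add_le {a b p : ℝ} (ha : 0 ≤ a) (hb : 0 ≤ b) (hp : 0 ≤ p)
    (hp1 : p ≤ 1) : (a + b) ^ p ≤ a ^ p + b ^ p := by
  have h := NNReal.rpow_add_le_add_rpow a.toNNReal b.toNNReal hp hp1
  have h2 : (((a.toNNReal : ℝ)) + (b.toNNReal : ℝ)) ^ p
      ≤ ((a.toNNReal : ℝ)) ^ p + ((b.toNNReal : ℝ)) ^ p := by
    exact_mod_cast h
  rwa [Real.coe_toNNReal a ha, Real.coe_toNNReal b hb] at h2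

private lemma aux_gauss_integrable {b : ℝ} (hb : 0 < b) :
    Integrable (fun x : EuclideanSpace ℝ (Fin d) => Real.exp (-b * ‖x‖ ^ 2)) := by
  have h := (GaussianFourier.integrable_cexp_neg_mul_sq_norm_add (b := (b : ℂ))
      (by simpa using hb) 0 (0 : EuclideanSpace ℝ (Fin d))).norm
  refine h.congr (Filter.Eventually.of_forall fun x => ?_)
  have e : (-(b:ℂ) * (‖x‖:ℂ) ^ 2 + 0 * ((inner ℝ (0 : EuclideanSpace ℝ (Fin d)) x : ℝ) : ℂ))
      = ((-b * ‖x‖ ^ 2 : ℝ) : ℂ) := by push_cast; ring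
  simp only [e, Complex.norm_exp_ofReal]

private lemma aux_gauss_value {b : ℝ} (hb : 0 < b) :
    ∫ x : EuclideanSpace ℝ (Fin d), Real.exp (-b * ‖x‖ ^ 2)
      = Real.pi ^ ((d : ℝ) / 2) * b ^ (-(d : ℝ) / 2) := by
  rw [GaussianFourier.integral_rexp_neg_mul_sq_norm hb, finrank_euclideanSpace_fin,
    Real.div_rpow Real.pi_pos.le hb.le, div_eq_mul_inv, ← Real.rpow_neg hb.le, neg_div]

private lemma aux_norm_le {b : ℝ} (hb : 0 < b) {t : ℝ} (ht : 0 ≤ t) :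
    t * Real.exp (-b * t ^ 2) ≤ (Real.sqrt b)⁻¹ * Real.exp (-(b / 2) * t ^ 2) := by
  have hsb : 0 < Real.sqrt b := Real.sqrt_pos.2 hb
  have h3 : Real.sqrt b ^ 2 = b := Real.sq_sqrt hb.le
  have h4 : (Real.sqrt b * t) ^ 2 = b * t ^ 2 := by rw [mul_pow, h3]
  have h1 : Real.sqrt b * t ≤ Real.exp (b / 2 * t ^ 2) := by
    have h2 : Real.sqrt b * t ≤ b / 2 * t ^ 2 + 1 := by
      nlinarith [sq_nonneg (Real.sqrt b * t - 1)]
    exact h2.trans (by linarith [Real.add_one_le_exp (b / 2 * t ^ 2)])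
  calc t * Real.exp (-b * t ^ 2)
      = (Real.sqrt b)⁻¹ * ((Real.sqrt b * t) * Real.exp (-b * t ^ 2)) := by
        field_simp
    _ ≤ (Real.sqrt b)⁻¹ * (Real.exp (b / 2 * t ^ 2) * Real.exp (-b * t ^ 2)) := by
        refine mul_le_mul_of_nonneg_left ?_ (inv_nonneg.2 hsb.le)
        exact mul_le_mul_of_nonneg_right h1 (Real.exp_pos _).le
    _ = (Real.sqrt b)⁻¹ * Real.exp (-(b / 2) * t ^ 2) := by
        rw [← Real.exp_add]; congr 1; ring

private lemma aux_norm_gauss_integrable {b : ℝ} (hb : 0 < b) :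
    Integrable (fun x : EuclideanSpace ℝ (Fin d) => ‖x‖ * Real.exp (-b * ‖x‖ ^ 2)) := by
  refine ((aux_gauss_integrable (half_pos hb)).const_mul
      ((Real.sqrt b)⁻¹)).mono' ?_ (Filter.Eventually.of_forall fun x => ?_)
  · exact (continuous_norm.mul (by fun_prop)).aestronglyMeasurable
  · rw [Real.norm_of_nonneg (mul_nonneg (norm_nonneg _) (Real.exp_pos _).le)]
    exact aux_norm_le hb (norm_nonneg x)

private lemma aux_norm_gauss_bound {b : ℝ} (hb : 0 < b) :
    ∫ x : EuclideanSpace ℝ (Fin d), ‖x‖ * Real.exp (-b * ‖x‖ ^ 2)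
      ≤ (2 * Real.pi) ^ ((d : ℝ) / 2) * b ^ (-((d : ℝ) + 1) / 2) := by
  have hmono := integral_mono_of_nonneg
    (Filter.Eventually.of_forall fun x : EuclideanSpace ℝ (Fin d) =>
      mul_nonneg (norm_nonneg _) (Real.exp_pos _).le)
    ((aux_gauss_integrable (d := d) (half_pos hb)).const_mul ((Real.sqrt b)⁻¹))
    (Filter.Eventually.of_forall fun x => aux_norm_le hb (norm_nonneg x))
  rw [integral_const_mul, aux_gauss_value (half_pos hb)] at hmono
  refine hmono.trans (le_of_eq ?_)
  have e1 : ((Real.sqrt b)⁻¹ : ℝ) = b ^ (-(1/2) : ℝ) := by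
    rw [Real.sqrt_eq_rpow, ← Real.rpow_neg hb.le]
  have e2 : (b / 2) ^ (-(d : ℝ) / 2) = b ^ (-(d : ℝ) / 2) * 2 ^ ((d : ℝ) / 2) := by
    rw [div_eq_mul_inv, Real.mul_rpow hb.le (by norm_num),
      Real.inv_rpow (by norm_num : (0:ℝ) ≤ 2), ← Real.rpow_neg (by norm_num : (0:ℝ) ≤ 2),
      neg_div, neg_neg]
  have e3 : (2 * Real.pi) ^ ((d : ℝ) / 2)
      = 2 ^ ((d : ℝ) / 2) * Real.pi ^ ((d : ℝ) / 2) :=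
    Real.mul_rpow (by norm_num) Real.pi_pos.le
  have e4 : b ^ (-((d : ℝ) + 1) / 2) = b ^ (-(1/2) : ℝ) * b ^ (-(d : ℝ) / 2) := by
    rw [← Real.rpow_add hb]; congr 1; ring
  rw [e1, e2, e3, e4]; ring

private lemma aux_ball_int {q : ℝ} (hq0 : q < 0) (hqd : -(d : ℝ) < q)
    (v : EuclideanSpace ℝ (Fin d)) :
    Integrable ((Metric.ball v 1).indicator
        fun x : EuclideanSpace ℝ (Fin d) => ‖x - v‖ ^ q) ∧
      ∫ x : EuclideanSpace ℝ (Fin d),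
          (Metric.ball v 1).indicator (fun x => ‖x - v‖ ^ q) x ≤
        2 * ((d : ℝ) + 1) *
          (volume (Metric.ball (0 : EuclideanSpace ℝ (Fin d)) 1)).toReal
          / ((d : ℝ) + q) := by
  classical
  set μ := (volume : Measure (EuclideanSpace ℝ (Fin d))) with hμ
  set g := (Metric.ball v 1).indicator
      (fun x : EuclideanSpace ℝ (Fin d) => ‖x - v‖ ^ q) with hg
  have hdq : 0 < (d : ℝ) + q := by linarith
  have hmeas : Measurable g := by
    refine Measurable.indicator ?_ measurableSet_ball
    have h1 : Measurable fun x : EuclideanSpace ℝ (Fin d) =>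
        Real.exp (Real.log ‖x - v‖ * q) :=
      (((measurable_id.sub_const v).norm.log).mul_const q).exp
    have h2 : (fun x : EuclideanSpace ℝ (Fin d) => ‖x - v‖ ^ q)
        = ({v} : Set (EuclideanSpace ℝ (Fin d))).piecewise (fun _ => (0:ℝ))
          (fun x => Real.exp (Real.log ‖x - v‖ * q)) := by
      funext x
      by_cases hx : x = v
      · subst hx
        rw [Set.piecewise_eq_of_mem _ _ _ (Set.mem_singleton x)]
        simp [Real.zero_rpow hq0.ne]
      · rw [Set.piecewise_eq_of_notMem _ _ _ (by simpa using hx),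
          Real.rpow_def_of_pos (norm_pos_iff.2 (sub_ne_zero.2 hx))]
    rw [h2]
    exact Measurable.piecewise (measurableSet_singleton v) measurable_const h1
  have hnn : ∀ x, 0 ≤ g x :=
    fun x => Set.indicator_nonneg (fun y _ => Real.rpow_nonneg (norm_nonneg _) _) x
  have hlayer : ∫⁻ x, ENNReal.ofReal (g x) ∂μ = ∫⁻ t in Set.Ioi 0, μ {a | t ≤ g a} :=
    lintegral_eq_lintegral_meas_le μ (Filter.Eventually.of_forall hnn) hmeas.aemeasurable
  obtain ⟨cB, hcB⟩ : ∃ c : ℝ≥0∞, c = μ (Metric.ball 0 1) := ⟨_, rfl⟩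
  have hcB_lt : cB < ⊤ := by rw [hcB]; exact measure_ball_lt_top
  have hcB_ne : cB ≠ ⊤ := hcB_lt.ne
  have hs : q⁻¹ * (d : ℝ) < -1 := by
    rw [mul_comm, ← div_eq_mul_inv, div_lt_iff_of_neg hq0]; linarith
  have hsub1 : ∀ t : ℝ, 0 < t → {a | t ≤ g a} ⊆ Metric.closedBall v 1 := by
    intro t ht a ha
    simp only [Set.mem_setOf_eq] at ha
    by_contra h
    have h' : a ∉ Metric.ball v 1 := fun h'' => h (Metric.ball_subset_closedBall h'')
    rw [hg, Set.indicator_of_notMem h'] at ha; linarith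
  have hsub2 : ∀ t : ℝ, 0 < t → {a | t ≤ g a} ⊆ Metric.closedBall v (t ^ q⁻¹) := by
    intro t ht a ha
    simp only [Set.mem_setOf_eq] at ha
    have hmem : a ∈ Metric.ball v 1 := by
      by_contra h; rw [hg, Set.indicator_of_notMem h] at ha; linarith
    rw [hg, Set.indicator_of_mem hmem] at ha
    have hav : 0 < ‖a - v‖ := by
      rcases eq_or_ne a v with rfl | h
      · rw [sub_self, norm_zero, Real.zero_rpow hq0.ne] at ha; linarith
      · exact norm_pos_iff.2 (sub_ne_zero.2 h)
    exact mem_closedBall_iff_norm.2 ((Real.le_rpow_inv_iff_of_neg hav ht hq0).2 ha)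
  have hm1 : ∀ t ∈ Set.Ioc (0:ℝ) 1, μ {a | t ≤ g a} ≤ cB := by
    intro t ht
    refine (measure_mono (hsub1 t ht.1)).trans_eq ?_
    rw [Measure.addHaar_closedBall _ _ zero_le_one, hcB]; simp
  have hm2 : ∀ t ∈ Set.Ioi (1:ℝ), μ {a | t ≤ g a}
      ≤ ENNReal.ofReal (t ^ (q⁻¹ * (d : ℝ))) * cB := by
    intro t ht
    have ht0 : (0:ℝ) < t := lt_trans one_pos ht
    refine (measure_mono (hsub2 t ht0)).trans ?_
    rw [hcB, Measure.addHaar_closedBall _ _ (Real.rpow_nonneg ht0.le _),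
      finrank_euclideanSpace_fin, ← Real.rpow_natCast (t ^ q⁻¹) d,
      ← Real.rpow_mul ht0.le]
  have hIoi : ∫⁻ t in Set.Ioi (1:ℝ), ENNReal.ofReal (t ^ (q⁻¹ * (d : ℝ)))
      = ENNReal.ofReal (-q / ((d : ℝ) + q)) := by
    rw [← ofReal_integral_eq_lintegral_ofReal (integrableOn_Ioi_rpow_of_lt hs one_pos)
        ((ae_restrict_iff' measurableSet_Ioi).2 (Filter.Eventually.of_forall
          fun t ht => Real.rpow_nonneg (le_of_lt (lt_trans one_pos ht)) _))]
    rw [integral_Ioi_rpow_of_lt hs one_pos, Real.one_rpow]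
    congr 1
    have hq' : q ≠ 0 := hq0.ne
    field_simp
  have hbound : ∫⁻ x, ENNReal.ofReal (g x) ∂μ
      ≤ cB + ENNReal.ofReal (-q / ((d : ℝ) + q)) * cB := by
    rw [hlayer]
    calc ∫⁻ t in Set.Ioi 0, μ {a | t ≤ g a}
        ≤ ∫⁻ t in Set.Ioc 0 1 ∪ Set.Ioi 1, μ {a | t ≤ g a} :=
          lintegral_mono_set Set.Ioi_subset_Ioc_union_Ioi
      _ ≤ (∫⁻ t in Set.Ioc 0 1, μ {a | t ≤ g a})
          + ∫⁻ t in Set.Ioi 1, μ {a | t ≤ g a} := lintegral_union_le _ _ _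
      _ ≤ cB + ENNReal.ofReal (-q / ((d : ℝ) + q)) * cB := by
          refine add_le_add ?_ ?_
          · calc ∫⁻ t in Set.Ioc 0 1, μ {a | t ≤ g a}
                ≤ ∫⁻ _ in Set.Ioc (0:ℝ) 1, cB := setLIntegral_mono' measurableSet_Ioc hm1
              _ = cB * volume (Set.Ioc (0:ℝ) 1) := setLIntegral_const _ _
              _ = cB := by simp [Real.volume_Ioc]
          · calc ∫⁻ t in Set.Ioi 1, μ {a | t ≤ g a}
                ≤ ∫⁻ t in Set.Ioi (1:ℝ), ENNReal.ofReal (t ^ (q⁻¹ * (d : ℝ))) * cB :=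
                  setLIntegral_mono' measurableSet_Ioi hm2
              _ = (∫⁻ t in Set.Ioi (1:ℝ), ENNReal.ofReal (t ^ (q⁻¹ * (d : ℝ)))) * cB :=
                  lintegral_mul_const' _ _ hcB_ne
              _ = ENNReal.ofReal (-q / ((d : ℝ) + q)) * cB := by rw [hIoi]
  have hRne : cB + ENNReal.ofReal (-q / ((d : ℝ) + q)) * cB ≠ ⊤ := by
    refine ENNReal.add_ne_top.2 ⟨hcB_ne, ?_⟩
    exact ENNReal.mul_ne_top ENNReal.ofReal_ne_top hcB_ne
  have hInt : Integrable g μ := by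
    refine ⟨hmeas.aestronglyMeasurable, ?_⟩
    rw [HasFiniteIntegral, lintegral_enorm_of_nonneg hnn]
    exact lt_of_le_of_lt hbound (lt_top_iff_ne_top.2 hRne)
  refine ⟨hInt, ?_⟩
  rw [integral_eq_lintegral_of_nonneg_ae (Filter.Eventually.of_forall hnn)
    hmeas.aestronglyMeasurable]
  have htr := ENNReal.toReal_mono hRne hbound
  refine htr.trans ?_
  rw [← hcB]
  have hdiv : 0 ≤ -q / ((d : ℝ) + q) := div_nonneg (neg_nonneg.2 hq0.le) hdq.le
  rw [ENNReal.toReal_add hcB_ne (ENNReal.mul_ne_top ENNReal.ofReal_ne_top hcB_ne),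
    ENNReal.toReal_mul, ENNReal.toReal_ofReal hdiv]
  have hBc : 0 ≤ cB.toReal := ENNReal.toReal_nonneg
  have heq : cB.toReal + (-q / ((d : ℝ) + q)) * cB.toReal
      = cB.toReal * (d : ℝ) / ((d : ℝ) + q) := by
    field_simp
    ring
  rw [heq]
  rw [div_le_div_iff₀ hdq hdq]
  have key : 0 ≤ cB.toReal * ((d : ℝ) + q) * ((d : ℝ) + 2) :=
    mul_nonneg (mul_nonneg hBc hdq.le) (by positivity)
  nlinarith [key]

end Aux

/-- **Binary convolution estimate:** for `β > 0`, `q₂ ∈ (−d, 1]` and `v ∈ ℝ^d`,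
`∫_{ℝ^d} |v₁ − v|^{q₂} e^{−β|v₁|²} dv₁ ≤ C_d · K(β,q₂) · (1 + |v|^{q₂⁺})`. -/
theorem binary_convolution_estimate (d : ℕ) (hd : 2 ≤ d) :
    ∃ C : ℝ, 0 < C ∧
      ∀ (β q₂ : ℝ), 0 < β → -(d : ℝ) < q₂ → q₂ ≤ 1 →
        ∀ v : EuclideanSpace ℝ (Fin d),
          (∫ v₁ : EuclideanSpace ℝ (Fin d), ‖v₁ - v‖ ^ q₂ * Real.exp (-β * ‖v₁‖ ^ 2))
            ≤ C * (if 0 < q₂ then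
                    1 + β ^ (-(d : ℝ) / 2) + β ^ (-((d : ℝ) + 1) / 2)
                  else
                    β ^ (-(d : ℝ) / 2) + 1 / ((d : ℝ) + q₂)) *
                (1 + ‖v‖ ^ max 0 q₂) := by
  classical
  obtain ⟨Bc, hBc⟩ : ∃ b : ℝ,
      b = (volume (Metric.ball (0 : EuclideanSpace ℝ (Fin d)) 1)).toReal := ⟨_, rfl⟩
  have hBc0 : 0 ≤ Bc := by rw [hBc]; exact ENNReal.toReal_nonneg
  obtain ⟨C, hC⟩ : ∃ c : ℝ,
      c = (2 * Real.pi) ^ ((d : ℝ) / 2) + 2 * ((d : ℝ) + 1) * Bc + 1 := ⟨_, rfl⟩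
  have hpi2 : (0:ℝ) < (2 * Real.pi) ^ ((d : ℝ) / 2) :=
    Real.rpow_pos_of_pos (by positivity) _
  have hCpos : 0 < C := by rw [hC]; positivity
  have hd00 : (0:ℝ) ≤ 2 * ((d : ℝ) + 1) * Bc := by positivity
  have hπC : Real.pi ^ ((d : ℝ) / 2) ≤ C := by
    have h : Real.pi ^ ((d : ℝ) / 2) ≤ (2 * Real.pi) ^ ((d : ℝ) / 2) :=
      Real.rpow_le_rpow Real.pi_pos.le (by linarith [Real.pi_pos]) (by positivity)
    rw [hC]; linarith
  have h2πC : (2 * Real.pi) ^ ((d : ℝ) / 2) ≤ C := by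
    rw [hC]; linarith
  have hBcC : 2 * ((d : ℝ) + 1) * Bc ≤ C := by
    rw [hC]; linarith [hpi2]
  refine ⟨C, hCpos, ?_⟩
  intro β q₂ hβ hqd hq1 v
  have hA : (0:ℝ) ≤ β ^ (-(d : ℝ) / 2) := Real.rpow_nonneg hβ.le _
  have hB : (0:ℝ) ≤ β ^ (-((d : ℝ) + 1) / 2) := Real.rpow_nonneg hβ.le _
  have hd0 : (0:ℝ) < d := by exact_mod_cast lt_of_lt_of_le two_pos hd
  rcases lt_trichotomy q₂ 0 with hneg | hzero | hpos
  · -- q₂ < 0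
    rw [if_neg (not_lt.2 hneg.le), max_eq_left hneg.le, Real.rpow_zero]
    obtain ⟨hgi, hgb⟩ := aux_ball_int hneg hqd v
    rw [← hBc] at hgb
    set g := (Metric.ball v 1).indicator
        (fun x : EuclideanSpace ℝ (Fin d) => ‖x - v‖ ^ q₂) with hgdef
    have hkey : ∀ x : EuclideanSpace ℝ (Fin d),
        ‖x - v‖ ^ q₂ * Real.exp (-β * ‖x‖ ^ 2)
          ≤ g x + Real.exp (-β * ‖x‖ ^ 2) := by
      intro x
      have hexp1 : Real.exp (-β * ‖x‖ ^ 2) ≤ 1 := by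
        rw [Real.exp_le_one_iff]
        have : (0:ℝ) ≤ β * ‖x‖ ^ 2 := by positivity
        linarith
      have hexp0 : (0:ℝ) < Real.exp (-β * ‖x‖ ^ 2) := Real.exp_pos _
      by_cases hx : x ∈ Metric.ball v 1
      · rw [hgdef, Set.indicator_of_mem hx]
        have h1 : ‖x - v‖ ^ q₂ * Real.exp (-β * ‖x‖ ^ 2) ≤ ‖x - v‖ ^ q₂ :=
          mul_le_of_le_one_right (Real.rpow_nonneg (norm_nonneg _) _) hexp1
        linarith
      · rw [hgdef, Set.indicator_of_notMem hx, zero_add]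
        have h1 : (1:ℝ) ≤ ‖x - v‖ := by
          have := Metric.mem_ball.not.1 hx
          rw [dist_eq_norm] at this
          linarith [not_lt.1 this]
        have h2 : ‖x - v‖ ^ q₂ ≤ 1 := Real.rpow_le_one_of_one_le_of_nonpos h1 hneg.le
        nlinarith
    have hInt : Integrable (fun x : EuclideanSpace ℝ (Fin d) =>
        g x + Real.exp (-β * ‖x‖ ^ 2)) := hgi.add (aux_gauss_integrable hβ)
    have hmono := integral_mono_of_nonneg
      (Filter.Eventually.of_forall fun x : EuclideanSpace ℝ (Fin d) =>
        mul_nonneg (Real.rpow_nonneg (norm_nonneg _) _) (Real.exp_pos _).le)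
      hInt (Filter.Eventually.of_forall hkey)
    rw [integral_add hgi (aux_gauss_integrable hβ), aux_gauss_value hβ] at hmono
    refine hmono.trans ?_
    have hdq : 0 < (d : ℝ) + q₂ := by linarith
    have hstep1 : 2 * ((d : ℝ) + 1) * Bc / ((d : ℝ) + q₂) ≤ C / ((d : ℝ) + q₂) := by
      gcongr
    have hstep2 : Real.pi ^ ((d : ℝ) / 2) * β ^ (-(d : ℝ) / 2)
        ≤ C * β ^ (-(d : ℝ) / 2) := mul_le_mul_of_nonneg_right hπC hA
    have hC1 : 0 ≤ C * (β ^ (-(d : ℝ) / 2) + 1 / ((d : ℝ) + q₂)) := by positivity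
    have : ∫ x : EuclideanSpace ℝ (Fin d), g x
        ≤ C / ((d : ℝ) + q₂) := le_trans hgb hstep1
    calc (∫ x : EuclideanSpace ℝ (Fin d), g x)
          + Real.pi ^ ((d : ℝ) / 2) * β ^ (-(d : ℝ) / 2)
        ≤ C / ((d : ℝ) + q₂) + C * β ^ (-(d : ℝ) / 2) := add_le_add this hstep2
      _ = C * (β ^ (-(d : ℝ) / 2) + 1 / ((d : ℝ) + q₂)) := by ring
      _ ≤ C * (β ^ (-(d : ℝ) / 2) + 1 / ((d : ℝ) + q₂)) * (1 + 1) := by linarith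
  · -- q₂ = 0
    subst hzero
    rw [if_neg (lt_irrefl 0), max_self, Real.rpow_zero]
    simp only [Real.rpow_zero, one_mul]
    rw [aux_gauss_value hβ]
    have h1d : 0 < 1 / ((d : ℝ) + 0) := by positivity
    nlinarith [mul_le_mul_of_nonneg_right hπC hA, hCpos.le, hA]
  · -- 0 < q₂
    rw [if_pos hpos, max_eq_right hpos.le]
    have hw : (0:ℝ) ≤ ‖v‖ ^ q₂ := Real.rpow_nonneg (norm_nonneg _) _
    have hkey : ∀ x : EuclideanSpace ℝ (Fin d),
        ‖x - v‖ ^ q₂ * Real.exp (-β * ‖x‖ ^ 2)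
          ≤ (1 + ‖v‖ ^ q₂) * Real.exp (-β * ‖x‖ ^ 2)
            + ‖x‖ * Real.exp (-β * ‖x‖ ^ 2) := by
      intro x
      have h1 : ‖x - v‖ ^ q₂ ≤ ‖x‖ ^ q₂ + ‖v‖ ^ q₂ := by
        calc ‖x - v‖ ^ q₂ ≤ (‖x‖ + ‖v‖) ^ q₂ :=
              Real.rpow_le_rpow (norm_nonneg _) (norm_sub_le _ _) hpos.le
          _ ≤ ‖x‖ ^ q₂ + ‖v‖ ^ q₂ :=
              real_rpow_add_le (norm_nonneg _) (norm_nonneg _) hpos.le hq1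
      have h2 : ‖x‖ ^ q₂ ≤ 1 + ‖x‖ := by
        rcases le_or_gt ‖x‖ 1 with h | h
        · have := Real.rpow_le_one (norm_nonneg _) h hpos.le
          linarith [norm_nonneg x]
        · have h' := Real.rpow_le_rpow_of_exponent_le h.le hq1
          rw [Real.rpow_one] at h'
          linarith
      have hexp0 : (0:ℝ) < Real.exp (-β * ‖x‖ ^ 2) := Real.exp_pos _
      calc ‖x - v‖ ^ q₂ * Real.exp (-β * ‖x‖ ^ 2)
          ≤ (1 + ‖x‖ + ‖v‖ ^ q₂) * Real.exp (-β * ‖x‖ ^ 2) := by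
            refine mul_le_mul_of_nonneg_right ?_ hexp0.le
            linarith
        _ = (1 + ‖v‖ ^ q₂) * Real.exp (-β * ‖x‖ ^ 2)
            + ‖x‖ * Real.exp (-β * ‖x‖ ^ 2) := by ring
    have hInt : Integrable (fun x : EuclideanSpace ℝ (Fin d) =>
        (1 + ‖v‖ ^ q₂) * Real.exp (-β * ‖x‖ ^ 2)
          + ‖x‖ * Real.exp (-β * ‖x‖ ^ 2)) :=
      ((aux_gauss_integrable hβ).const_mul _).add (aux_norm_gauss_integrable hβ)
    have hmono := integral_mono_of_nonneg
      (Filter.Eventually.of_forall fun x : EuclideanSpace ℝ (Fin d) =>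
        mul_nonneg (Real.rpow_nonneg (norm_nonneg _) _) (Real.exp_pos _).le)
      hInt (Filter.Eventually.of_forall hkey)
    rw [integral_add ((aux_gauss_integrable hβ).const_mul _)
      (aux_norm_gauss_integrable hβ), integral_const_mul, aux_gauss_value hβ] at hmono
    refine hmono.trans ?_
    have hng := aux_norm_gauss_bound (d := d) hβ
    have hw1 : (1:ℝ) ≤ 1 + ‖v‖ ^ q₂ := by linarith
    have t1 : (1 + ‖v‖ ^ q₂) * (Real.pi ^ ((d : ℝ) / 2) * β ^ (-(d : ℝ) / 2))
        ≤ (1 + ‖v‖ ^ q₂) * (C * β ^ (-(d : ℝ) / 2)) :=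
      mul_le_mul_of_nonneg_left (mul_le_mul_of_nonneg_right hπC hA) (by linarith)
    have t2 : (∫ x : EuclideanSpace ℝ (Fin d), ‖x‖ * Real.exp (-β * ‖x‖ ^ 2))
        ≤ C * β ^ (-((d : ℝ) + 1) / 2) :=
      hng.trans (mul_le_mul_of_nonneg_right h2πC hB)
    have hfin : (1 + ‖v‖ ^ q₂) * (C * β ^ (-(d : ℝ) / 2)) + C * β ^ (-((d : ℝ) + 1) / 2)
        ≤ C * (1 + β ^ (-(d : ℝ) / 2) + β ^ (-((d : ℝ) + 1) / 2)) * (1 + ‖v‖ ^ q₂) := by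
      nlinarith [mul_nonneg hCpos.le hB, mul_nonneg hCpos.le hA,
        mul_nonneg (mul_nonneg hCpos.le hB) hw, mul_nonneg (mul_nonneg hCpos.le hA) hw,
        mul_nonneg hCpos.le hw]
    linarith
end

section
/- Let d ≥ 2, γ₃ ∈ (−2d+1, 1], and let b₃ : [−1,1] × [−1/2,1/2] → [0,∞] be measurable and even in its first argument (b₃(−z,w) = b₃(z,w)). Then for all measurable f, g, h : ℝ^d × ℝ^d → [0,∞], ∫_{ℝ^d}∫_{ℝ^{2d}}∫_{ℝ^d}∫_{S^{2d−1}} |ũ|^{γ₃} b₃(ū·ω, ω₁·ω₂) f(x, v*) g(x, v₁*) h(x, v₂*) dσ(ω) dv₁ dv₂ dv dx = ∫_{ℝ^d}∫_{ℝ^{2d}}∫_{ℝ^d}∫_{S^{2d−1}} |ũ|^{γ₃} b₃(ū·ω, ω₁·ω₂) f(x, v) g(x, v₁) h(x, v₂) dσ(ω) dv₁ dv₂ dv dx, where σ is the surface measure on S^{2d−1}. In other words, the L¹ norm of the ternary gain operator equals the L¹ norm of the ternary loss operator. -/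
open MeasureTheory Metric
open scoped RealInnerProductSpace ENNReal

noncomputable section

/-- `ℝ^d` as a Euclidean space. -/
abbrev Euc (d : ℕ) := EuclideanSpace ℝ (Fin d)

/-- `ℝ^{2d}` as a Euclidean space (so that its unit sphere is `S^{2d-1}`). -/
abbrev Euc2 (d : ℕ) := EuclideanSpace ℝ (Fin (d + d))

/-- First `ℝ^d`-component of a vector of `ℝ^{2d}`. -/
def split1 (d : ℕ) (w : Euc2 d) : Euc d := WithLp.toLp 2 (fun i => w (Fin.castAdd d i))

/-- Second `ℝ^d`-component of a vector of `ℝ^{2d}`. -/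
def split2 (d : ℕ) (w : Euc2 d) : Euc d := WithLp.toLp 2 (fun i => w (Fin.natAdd d i))

/-- The ternary relative speed `|ũ| = √(|v−v₁|² + |v−v₂|² + |v₁−v₂|²)`. -/
def tRel (d : ℕ) (v v₁ v₂ : Euc d) : ℝ :=
  Real.sqrt (‖v - v₁‖ ^ 2 + ‖v - v₂‖ ^ 2 + ‖v₁ - v₂‖ ^ 2)

/-- The scalar `c = (ω₁·(v₁−v) + ω₂·(v₂−v))/(1 + ω₁·ω₂)` of the ternary collision. -/
def tC (d : ℕ) (v v₁ v₂ : Euc d) (ω : Euc2 d) : ℝ :=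
  (⟪split1 d ω, v₁ - v⟫ + ⟪split2 d ω, v₂ - v⟫) / (1 + ⟪split1 d ω, split2 d ω⟫)

/-- Ternary post-collisional velocity `v* = v + c(ω₁+ω₂)`. -/
def tV (d : ℕ) (v v₁ v₂ : Euc d) (ω : Euc2 d) : Euc d :=
  v + tC d v v₁ v₂ ω • (split1 d ω + split2 d ω)

/-- Ternary post-collisional velocity `v₁* = v₁ − cω₁`. -/
def tV₁ (d : ℕ) (v v₁ v₂ : Euc d) (ω : Euc2 d) : Euc d :=
  v₁ - tC d v v₁ v₂ ω • split1 d ω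

/-- Ternary post-collisional velocity `v₂* = v₂ − cω₂`. -/
def tV₂ (d : ℕ) (v v₁ v₂ : Euc d) (ω : Euc2 d) : Euc d :=
  v₂ - tC d v v₁ v₂ ω • split2 d ω

lemma split1_measurable (d : ℕ) : Measurable (split1 d) :=
  Continuous.measurable (by unfold split1; fun_prop)

lemma split2_measurable (d : ℕ) : Measurable (split2 d) :=
  Continuous.measurable (by unfold split2; fun_prop)

lemma norm_split_sq {d : ℕ} (w : Euc2 d) :
    ‖split1 d w‖ ^ 2 + ‖split2 d w‖ ^ 2 = ‖w‖ ^ 2 := by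
  rw [← real_inner_self_eq_norm_sq, ← real_inner_self_eq_norm_sq, ← real_inner_self_eq_norm_sq]
  simp only [PiLp.inner_apply, RCLike.inner_apply, conj_trivial, split1, split2, PiLp.toLp_apply]
  rw [Fin.sum_univ_add]

lemma one_add_inner_pos {d : ℕ} (w : Euc2 d) (hw : ‖w‖ = 1) :
    (0:ℝ) < 1 + ⟪split1 d w, split2 d w⟫ := by
  have h := abs_real_inner_le_norm (split1 d w) (split2 d w)
  have hn := norm_split_sq w
  rw [hw] at hn
  have h2 := neg_abs_le ⟪split1 d w, split2 d w⟫
  nlinarith [sq_nonneg (‖split1 d w‖ - ‖split2 d w‖), abs_nonneg ⟪split1 d w, split2 d w⟫]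
section Algebra
variable {d : ℕ} (v v₁ v₂ : Euc d) (ω : Euc2 d)

lemma tC_mul_s (hs : 1 + ⟪split1 d ω, split2 d ω⟫ ≠ 0) :
    tC d v v₁ v₂ ω * (1 + ⟪split1 d ω, split2 d ω⟫)
      = ⟪split1 d ω, v₁ - v⟫ + ⟪split2 d ω, v₂ - v⟫ :=
  div_mul_cancel₀ _ hs

lemma inner_star_sum (hs : 1 + ⟪split1 d ω, split2 d ω⟫ ≠ 0)
    (h1 : ‖split1 d ω‖ ^ 2 + ‖split2 d ω‖ ^ 2 = 1) :
    ⟪split1 d ω, tV₁ d v v₁ v₂ ω - tV d v v₁ v₂ ω⟫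
      + ⟪split2 d ω, tV₂ d v v₁ v₂ ω - tV d v v₁ v₂ ω⟫
      = -(⟪split1 d ω, v₁ - v⟫ + ⟪split2 d ω, v₂ - v⟫) := by
  have hc := tC_mul_s v v₁ v₂ ω hs
  have hba : ⟪split2 d ω, split1 d ω⟫ = ⟪split1 d ω, split2 d ω⟫ := real_inner_comm _ _
  simp only [tV, tV₁, tV₂, inner_sub_right, inner_add_right, inner_smul_right,
    real_inner_self_eq_norm_sq, hba, inner_sub_right] at hc ⊢
  linear_combination (-2 : ℝ) * hc - 2 * (tC d v v₁ v₂ ω) * h1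

lemma tC_star (hs : 1 + ⟪split1 d ω, split2 d ω⟫ ≠ 0)
    (h1 : ‖split1 d ω‖ ^ 2 + ‖split2 d ω‖ ^ 2 = 1) :
    tC d (tV d v v₁ v₂ ω) (tV₁ d v v₁ v₂ ω) (tV₂ d v v₁ v₂ ω) ω = - tC d v v₁ v₂ ω := by
  unfold tC
  rw [inner_star_sum v v₁ v₂ ω hs h1, neg_div]
lemma tSum : tV d v v₁ v₂ ω + tV₁ d v v₁ v₂ ω + tV₂ d v v₁ v₂ ω = v + v₁ + v₂ := by
  simp only [tV, tV₁, tV₂, smul_add]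
  abel

lemma tEnergy (hs : 1 + ⟪split1 d ω, split2 d ω⟫ ≠ 0)
    (h1 : ‖split1 d ω‖ ^ 2 + ‖split2 d ω‖ ^ 2 = 1) :
    ‖tV d v v₁ v₂ ω‖ ^ 2 + ‖tV₁ d v v₁ v₂ ω‖ ^ 2 + ‖tV₂ d v v₁ v₂ ω‖ ^ 2
      = ‖v‖ ^ 2 + ‖v₁‖ ^ 2 + ‖v₂‖ ^ 2 := by
  have hc := tC_mul_s v v₁ v₂ ω hs
  have hba : ⟪split2 d ω, split1 d ω⟫ = ⟪split1 d ω, split2 d ω⟫ := real_inner_comm _ _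
  have e1 : ⟪v, split1 d ω⟫ = ⟪split1 d ω, v⟫ := real_inner_comm _ _
  have e2 : ⟪v, split2 d ω⟫ = ⟪split2 d ω, v⟫ := real_inner_comm _ _
  have e3 : ⟪v₁, split1 d ω⟫ = ⟪split1 d ω, v₁⟫ := real_inner_comm _ _
  have e4 : ⟪v₂, split2 d ω⟫ = ⟪split2 d ω, v₂⟫ := real_inner_comm _ _
  simp only [tV, tV₁, tV₂, norm_add_sq_real, norm_sub_sq_real, inner_add_right,
    inner_smul_right, norm_smul, mul_pow, Real.norm_eq_abs, sq_abs, inner_sub_right,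
    real_inner_self_eq_norm_sq, hba, e1, e2, e3, e4] at hc ⊢
  have n1 : ⟪split1 d ω, v₁ - v⟫ = ⟪split1 d ω, v₁⟫ - ⟪split1 d ω, v⟫ := inner_sub_right _ _ _
  have n2 : ⟪split2 d ω, v₂ - v⟫ = ⟪split2 d ω, v₂⟫ - ⟪split2 d ω, v⟫ := inner_sub_right _ _ _
  linear_combination (2 * tC d v v₁ v₂ ω) * hc + 2 * (tC d v v₁ v₂ ω)^2 * h1

lemma sum_sq_formula (x y z : Euc d) :
    ‖x - y‖ ^ 2 + ‖x - z‖ ^ 2 + ‖y - z‖ ^ 2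
      = 3 * (‖x‖ ^ 2 + ‖y‖ ^ 2 + ‖z‖ ^ 2) - ‖x + y + z‖ ^ 2 := by
  have h1 : ⟪y, x⟫ = ⟪x, y⟫ := real_inner_comm _ _
  have h2 : ⟪z, x⟫ = ⟪x, z⟫ := real_inner_comm _ _
  have h3 : ⟪z, y⟫ = ⟪y, z⟫ := real_inner_comm _ _
  simp only [norm_sub_sq_real, norm_add_sq_real, inner_add_left, inner_add_right,
    real_inner_self_eq_norm_sq, h1, h2, h3]
  ring

lemma tRel_star (hs : 1 + ⟪split1 d ω, split2 d ω⟫ ≠ 0)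
    (h1 : ‖split1 d ω‖ ^ 2 + ‖split2 d ω‖ ^ 2 = 1) :
    tRel d (tV d v v₁ v₂ ω) (tV₁ d v v₁ v₂ ω) (tV₂ d v v₁ v₂ ω) = tRel d v v₁ v₂ := by
  unfold tRel
  rw [sum_sq_formula, sum_sq_formula, tEnergy v v₁ v₂ ω hs h1, tSum v v₁ v₂ ω]

lemma tV_star (hs : 1 + ⟪split1 d ω, split2 d ω⟫ ≠ 0)
    (h1 : ‖split1 d ω‖ ^ 2 + ‖split2 d ω‖ ^ 2 = 1) :
    tV d (tV d v v₁ v₂ ω) (tV₁ d v v₁ v₂ ω) (tV₂ d v v₁ v₂ ω) ω = v := by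
  conv_lhs => rw [tV]
  rw [tC_star v v₁ v₂ ω hs h1, tV, neg_smul]
  abel

lemma tV₁_star (hs : 1 + ⟪split1 d ω, split2 d ω⟫ ≠ 0)
    (h1 : ‖split1 d ω‖ ^ 2 + ‖split2 d ω‖ ^ 2 = 1) :
    tV₁ d (tV d v v₁ v₂ ω) (tV₁ d v v₁ v₂ ω) (tV₂ d v v₁ v₂ ω) ω = v₁ := by
  conv_lhs => rw [tV₁]
  rw [tC_star v v₁ v₂ ω hs h1, tV₁, neg_smul]
  abel

lemma tV₂_star (hs : 1 + ⟪split1 d ω, split2 d ω⟫ ≠ 0)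
    (h1 : ‖split1 d ω‖ ^ 2 + ‖split2 d ω‖ ^ 2 = 1) :
    tV₂ d (tV d v v₁ v₂ ω) (tV₁ d v v₁ v₂ ω) (tV₂ d v v₁ v₂ ω) ω = v₂ := by
  conv_lhs => rw [tV₂]
  rw [tC_star v v₁ v₂ ω hs h1, tV₂, neg_smul]
  abel

end Algebra
section LinearStuff
variable {d : ℕ} (ω : Euc2 d)

lemma tC_add (v v' v₁ v₁' v₂ v₂' : Euc d) :
    tC d (v + v') (v₁ + v₁') (v₂ + v₂') ω = tC d v v₁ v₂ ω + tC d v' v₁' v₂' ω := by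
  unfold tC
  rw [← add_div]
  congr 1
  simp only [inner_sub_right, inner_add_right]
  ring

lemma tC_smul (r : ℝ) (v v₁ v₂ : Euc d) :
    tC d (r • v) (r • v₁) (r • v₂) ω = r * tC d v v₁ v₂ ω := by
  unfold tC
  rw [← mul_div_assoc]
  congr 1
  simp only [inner_sub_right, inner_smul_right]
  ring

/-- The ternary collision map as a linear map on `(ℝ^d)³`, for fixed `ω`. -/
def tMap : (Euc d × Euc d × Euc d) →ₗ[ℝ] (Euc d × Euc d × Euc d) where
  toFun p := (tV d p.1 p.2.1 p.2.2 ω, tV₁ d p.1 p.2.1 p.2.2 ω, tV₂ d p.1 p.2.1 p.2.2 ω)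
  map_add' p q := by
    ext <;> simp only [tV, tV₁, tV₂, tC_add, Prod.fst_add, Prod.snd_add, add_smul,
      PiLp.add_apply, PiLp.sub_apply, PiLp.smul_apply] <;> ring
  map_smul' r p := by
    ext <;> simp only [tV, tV₁, tV₂, tC_smul, Prod.smul_fst, Prod.smul_snd, mul_smul,
      RingHom.id_apply, PiLp.add_apply, PiLp.sub_apply, PiLp.smul_apply, smul_eq_mul] <;> ring

lemma tMap_involutive (hs : 1 + ⟪split1 d ω, split2 d ω⟫ ≠ 0)
    (h1 : ‖split1 d ω‖ ^ 2 + ‖split2 d ω‖ ^ 2 = 1) (p : Euc d × Euc d × Euc d) :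
    tMap ω (tMap ω p) = p := by
  obtain ⟨v, v₁, v₂⟩ := p
  simp only [tMap, LinearMap.coe_mk, AddHom.coe_mk]
  exact Prod.ext (tV_star v v₁ v₂ ω hs h1)
    (Prod.ext (tV₁_star v v₁ v₂ ω hs h1) (tV₂_star v v₁ v₂ ω hs h1))

lemma tMap_measurePreserving (hs : 1 + ⟪split1 d ω, split2 d ω⟫ ≠ 0)
    (h1 : ‖split1 d ω‖ ^ 2 + ‖split2 d ω‖ ^ 2 = 1) :
    MeasurePreserving (tMap ω) (volume : Measure (Euc d × Euc d × Euc d)) volume := by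
  have hcomp : (tMap ω).comp (tMap ω) = LinearMap.id := by
    apply LinearMap.ext
    intro p
    simpa using tMap_involutive ω hs h1 p
  have hdet2 : LinearMap.det (tMap ω) * LinearMap.det (tMap ω) = 1 := by
    rw [← LinearMap.det_comp, hcomp, LinearMap.det_id]
  have hdet : LinearMap.det (tMap ω) ≠ 0 := by
    intro h
    rw [h] at hdet2
    norm_num at hdet2
  have habs : |(LinearMap.det (tMap (d := d) ω))⁻¹| = 1 := by
    rw [abs_inv]
    have : |LinearMap.det (tMap (d := d) ω)| = 1 := by
      nlinarith [abs_nonneg (LinearMap.det (tMap (d := d) ω)),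
        sq_abs (LinearMap.det (tMap (d := d) ω))]
    rw [this]; norm_num
  haveI : BorelSpace (Euc d × Euc d × Euc d) := Prod.borelSpace
  haveI hA : Measure.IsAddHaarMeasure (volume : Measure (Euc d × Euc d)) :=
    @Measure.prod.instIsAddHaarMeasure _ _ _ _ _ _ _ _ volume volume _ _ _ _ _ _
  haveI hB : Measure.IsAddHaarMeasure (volume : Measure (Euc d × Euc d × Euc d)) :=
    @Measure.prod.instIsAddHaarMeasure _ _ _ _ _ _ _ _ volume volume _ hA _ _ _ _
  refine ⟨(tMap ω).continuous_of_finiteDimensional.measurable, ?_⟩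
  rw [Measure.map_linearMap_addHaar_eq_smul_addHaar _ hdet, habs]
  simp

end LinearStuff
section Nest
variable {d : ℕ}

local notation "𝕊" => sphere (0 : Euc2 d) 1
local notation "σm" => Measure.toSphere (volume : Measure (Euc2 d))

lemma sfin2 : SigmaFinite (volume : Measure (Euc d × Euc d)) := by
  rw [Measure.volume_eq_prod]; infer_instance

lemma sfin3 : SigmaFinite (volume : Measure (Euc d × Euc d × Euc d)) := by
  haveI := sfin2 (d := d)
  rw [Measure.volume_eq_prod]; infer_instance

lemma nest (W : ↥(sphere (0 : Euc2 d) 1) × (Euc d × Euc d × Euc d) → ℝ≥0∞)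
    (hW : Measurable W) :
    ∫⁻ v : Euc d, ∫⁻ v₁ : Euc d, ∫⁻ v₂ : Euc d, ∫⁻ ω : 𝕊, W (ω, (v, v₁, v₂)) ∂σm
      = ∫⁻ q, W q ∂(Measure.prod σm volume) := by
  haveI := sfin2 (d := d)
  haveI := sfin3 (d := d)
  rw [MeasureTheory.lintegral_prod _ hW.aemeasurable]
  have hinner : ∀ ω : 𝕊, (∫⁻ p : Euc d × Euc d × Euc d, W (ω, p))
      = ∫⁻ v : Euc d, ∫⁻ v₁ : Euc d, ∫⁻ v₂ : Euc d, W (ω, (v, v₁, v₂)) := by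
    intro ω
    rw [Measure.volume_eq_prod, MeasureTheory.lintegral_prod (fun p => W (ω, p))
      (Measurable.aemeasurable (by exact hW.comp measurable_prodMk_left))]
    refine lintegral_congr fun v => ?_
    rw [Measure.volume_eq_prod, MeasureTheory.lintegral_prod (fun r => W (ω, (v, r)))
      (Measurable.aemeasurable (by
        exact hW.comp (measurable_const.prodMk (measurable_const.prodMk measurable_id))))]
  have s1 : ∀ v v₁ : Euc d, (∫⁻ v₂ : Euc d, ∫⁻ ω : 𝕊, W (ω, (v, v₁, v₂)) ∂σm)
      = ∫⁻ ω : 𝕊, ∫⁻ v₂ : Euc d, W (ω, (v, v₁, v₂)) ∂volume ∂σm := by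
    intro v v₁
    refine lintegral_lintegral_swap (f := fun v₂ ω => W (ω, (v, v₁, v₂)))
      (Measurable.aemeasurable ?_)
    exact hW.comp (measurable_snd.prodMk (measurable_const.prodMk
      (measurable_const.prodMk measurable_fst)))
  have s2 : ∀ v : Euc d, (∫⁻ v₁ : Euc d, ∫⁻ ω : 𝕊,
        (∫⁻ v₂ : Euc d, W (ω, (v, v₁, v₂))) ∂σm)
      = ∫⁻ ω : 𝕊, ∫⁻ v₁ : Euc d, (∫⁻ v₂ : Euc d, W (ω, (v, v₁, v₂))) ∂volume ∂σm := by
    intro v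
    refine lintegral_lintegral_swap
      (f := fun v₁ (ω : 𝕊) => ∫⁻ v₂ : Euc d, W (ω, (v, v₁, v₂))) (Measurable.aemeasurable ?_)
    refine Measurable.lintegral_prod_right'
      (f := fun (r : (Euc d × ↥𝕊) × Euc d) => W (r.1.2, (v, r.1.1, r.2))) ?_
    exact hW.comp ((measurable_fst.snd).prodMk
      (measurable_const.prodMk ((measurable_fst.fst).prodMk measurable_snd)))
  have s3 : (∫⁻ v : Euc d, ∫⁻ ω : 𝕊,
        (∫⁻ v₁ : Euc d, ∫⁻ v₂ : Euc d, W (ω, (v, v₁, v₂))) ∂σm)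
      = ∫⁻ ω : 𝕊, (∫⁻ v : Euc d,
          (∫⁻ v₁ : Euc d, ∫⁻ v₂ : Euc d, W (ω, (v, v₁, v₂))) ∂volume) ∂σm := by
    refine lintegral_lintegral_swap
      (f := fun v (ω : 𝕊) => ∫⁻ v₁ : Euc d, ∫⁻ v₂ : Euc d, W (ω, (v, v₁, v₂)))
      (Measurable.aemeasurable ?_)
    refine Measurable.lintegral_prod_right'
      (f := fun (r : (Euc d × ↥𝕊) × Euc d) => ∫⁻ v₂ : Euc d, W (r.1.2, (r.1.1, r.2, v₂))) ?_
    refine Measurable.lintegral_prod_right'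
      (f := fun (r : ((Euc d × ↥𝕊) × Euc d) × Euc d) => W (r.1.1.2, (r.1.1.1, r.1.2, r.2))) ?_
    exact hW.comp ((measurable_fst.fst.snd).prodMk
      ((measurable_fst.fst.fst).prodMk ((measurable_fst.snd).prodMk measurable_snd)))
  calc
    ∫⁻ v : Euc d, ∫⁻ v₁ : Euc d, ∫⁻ v₂ : Euc d, ∫⁻ ω : 𝕊, W (ω, (v, v₁, v₂)) ∂σm
        = ∫⁻ v : Euc d, ∫⁻ v₁ : Euc d, ∫⁻ ω : 𝕊,
            (∫⁻ v₂ : Euc d, W (ω, (v, v₁, v₂))) ∂σm :=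
      lintegral_congr fun v => lintegral_congr fun v₁ => s1 v v₁
    _ = ∫⁻ v : Euc d, ∫⁻ ω : 𝕊,
            (∫⁻ v₁ : Euc d, ∫⁻ v₂ : Euc d, W (ω, (v, v₁, v₂))) ∂σm :=
      lintegral_congr fun v => s2 v
    _ = ∫⁻ ω : 𝕊, (∫⁻ v : Euc d,
          (∫⁻ v₁ : Euc d, ∫⁻ v₂ : Euc d, W (ω, (v, v₁, v₂))) ∂volume) ∂σm := s3
    _ = ∫⁻ ω : 𝕊, (∫⁻ p : Euc d × Euc d × Euc d, W (ω, p) ∂volume) ∂σm :=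
      lintegral_congr fun ω => (hinner ω).symm

end Nest
section Main
variable {d : ℕ}

local notation "𝕊" => sphere (0 : Euc2 d) 1
local notation "σm" => Measure.toSphere (volume : Measure (Euc2 d))

lemma sphere_h1 (ω : ↥𝕊) :
    ‖split1 d (ω : Euc2 d)‖ ^ 2 + ‖split2 d (ω : Euc2 d)‖ ^ 2 = 1 := by
  have hn : ‖(ω : Euc2 d)‖ = 1 := mem_sphere_zero_iff_norm.mp ω.2
  rw [norm_split_sq, hn, one_pow]

lemma sphere_hs (ω : ↥𝕊) :
    1 + ⟪split1 d (ω : Euc2 d), split2 d (ω : Euc2 d)⟫ ≠ 0 :=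
  (one_add_inner_pos _ (mem_sphere_zero_iff_norm.mp ω.2)).ne'

/-- The skew product collision map on `S^{2d-1} × (ℝ^d)³`. -/
def tΦ (d : ℕ) : ↥(sphere (0 : Euc2 d) 1) × (Euc d × Euc d × Euc d)
    → ↥(sphere (0 : Euc2 d) 1) × (Euc d × Euc d × Euc d) :=
  fun q => (q.1, tMap (q.1 : Euc2 d) q.2)

lemma measurable_tC_aux :
    Measurable fun q : ↥𝕊 × (Euc d × Euc d × Euc d) =>
      tC d q.2.1 q.2.2.1 q.2.2.2 (q.1 : Euc2 d) := by
  unfold tC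
  have mω1 : Measurable fun q : ↥𝕊 × (Euc d × Euc d × Euc d) => split1 d (q.1 : Euc2 d) :=
    (split1_measurable d).comp (measurable_subtype_coe.comp measurable_fst)
  have mω2 : Measurable fun q : ↥𝕊 × (Euc d × Euc d × Euc d) => split2 d (q.1 : Euc2 d) :=
    (split2_measurable d).comp (measurable_subtype_coe.comp measurable_fst)
  exact ((mω1.inner (measurable_snd.snd.fst.sub measurable_snd.fst)).add
    (mω2.inner (measurable_snd.snd.snd.sub measurable_snd.fst))).div
    (measurable_const.add (mω1.inner mω2))

lemma measurable_tΦ : Measurable (tΦ d) := by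
  have mc := measurable_tC_aux (d := d)
  have mω1 : Measurable fun q : ↥𝕊 × (Euc d × Euc d × Euc d) => split1 d (q.1 : Euc2 d) :=
    (split1_measurable d).comp (measurable_subtype_coe.comp measurable_fst)
  have mω2 : Measurable fun q : ↥𝕊 × (Euc d × Euc d × Euc d) => split2 d (q.1 : Euc2 d) :=
    (split2_measurable d).comp (measurable_subtype_coe.comp measurable_fst)
  refine measurable_fst.prodMk ?_
  have h1 : Measurable fun q : ↥𝕊 × (Euc d × Euc d × Euc d) =>
      tV d q.2.1 q.2.2.1 q.2.2.2 (q.1 : Euc2 d) := by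
    unfold tV
    exact measurable_snd.fst.add (mc.smul (mω1.add mω2))
  have h2 : Measurable fun q : ↥𝕊 × (Euc d × Euc d × Euc d) =>
      tV₁ d q.2.1 q.2.2.1 q.2.2.2 (q.1 : Euc2 d) := by
    unfold tV₁
    exact measurable_snd.snd.fst.sub (mc.smul mω1)
  have h3 : Measurable fun q : ↥𝕊 × (Euc d × Euc d × Euc d) =>
      tV₂ d q.2.1 q.2.2.1 q.2.2.2 (q.1 : Euc2 d) := by
    unfold tV₂
    exact measurable_snd.snd.snd.sub (mc.smul mω2)
  have : (fun q : ↥𝕊 × (Euc d × Euc d × Euc d) => tMap (q.1 : Euc2 d) q.2)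
      = fun q => (tV d q.2.1 q.2.2.1 q.2.2.2 (q.1 : Euc2 d),
          tV₁ d q.2.1 q.2.2.1 q.2.2.2 (q.1 : Euc2 d),
          tV₂ d q.2.1 q.2.2.1 q.2.2.2 (q.1 : Euc2 d)) := rfl
  rw [this]
  exact h1.prodMk (h2.prodMk h3)

end Main
section Main2
variable {d : ℕ}

local notation "𝕊" => sphere (0 : Euc2 d) 1
local notation "σm" => Measure.toSphere (volume : Measure (Euc2 d))

lemma tΦ_measurePreserving :
    MeasurePreserving (tΦ d) (Measure.prod σm volume) (Measure.prod σm volume) := by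
  haveI := sfin2 (d := d)
  haveI := sfin3 (d := d)
  have := MeasurePreserving.skew_product (g := fun (ω : ↥𝕊) p => tMap (ω : Euc2 d) p)
    (MeasurePreserving.id σm) (by exact measurable_snd.comp measurable_tΦ)
    (Filter.Eventually.of_forall fun ω =>
      (tMap_measurePreserving (ω : Euc2 d) (sphere_hs ω) (sphere_h1 ω)).map_eq)
  exact this

lemma measurable_kern (γ₃ : ℝ) (b₃ : ℝ → ℝ → ℝ≥0∞) (hb₃ : Measurable (Function.uncurry b₃)) :
    Measurable fun q : ↥𝕊 × (Euc d × Euc d × Euc d) =>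
      ENNReal.ofReal (tRel d q.2.1 q.2.2.1 q.2.2.2 ^ γ₃) *
        b₃ ((⟪split1 d (q.1 : Euc2 d), q.2.2.1 - q.2.1⟫
              + ⟪split2 d (q.1 : Euc2 d), q.2.2.2 - q.2.1⟫) / tRel d q.2.1 q.2.2.1 q.2.2.2)
          ⟪split1 d (q.1 : Euc2 d), split2 d (q.1 : Euc2 d)⟫ := by
  have mω1 : Measurable fun q : ↥𝕊 × (Euc d × Euc d × Euc d) => split1 d (q.1 : Euc2 d) :=
    (split1_measurable d).comp (measurable_subtype_coe.comp measurable_fst)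
  have mω2 : Measurable fun q : ↥𝕊 × (Euc d × Euc d × Euc d) => split2 d (q.1 : Euc2 d) :=
    (split2_measurable d).comp (measurable_subtype_coe.comp measurable_fst)
  have mrel : Measurable fun q : ↥𝕊 × (Euc d × Euc d × Euc d) =>
      tRel d q.2.1 q.2.2.1 q.2.2.2 := by
    unfold tRel
    refine Measurable.sqrt ?_
    exact (((measurable_snd.fst.sub measurable_snd.snd.fst).norm.pow measurable_const).add
      ((measurable_snd.fst.sub measurable_snd.snd.snd).norm.pow measurable_const)).add
      ((measurable_snd.snd.fst.sub measurable_snd.snd.snd).norm.pow measurable_const)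
  refine Measurable.mul ?_ ?_
  · exact ENNReal.measurable_ofReal.comp (mrel.pow measurable_const)
  · exact hb₃.comp ((((mω1.inner (measurable_snd.snd.fst.sub measurable_snd.fst)).add
      (mω2.inner (measurable_snd.snd.snd.sub measurable_snd.fst))).div mrel).prodMk
      (mω1.inner mω2))

lemma key (γ₃ : ℝ) (b₃ : ℝ → ℝ → ℝ≥0∞) (hb₃ : Measurable (Function.uncurry b₃))
    (hb₃even : ∀ z w : ℝ, b₃ (-z) w = b₃ z w)
    (F G H : Euc d → ℝ≥0∞)
    (hF : Measurable F) (hG : Measurable G) (hH : Measurable H) :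
    (∫⁻ v : Euc d, ∫⁻ v₁ : Euc d, ∫⁻ v₂ : Euc d, ∫⁻ ω : 𝕊,
        ENNReal.ofReal (tRel d v v₁ v₂ ^ γ₃) *
          b₃ ((⟪split1 d (ω : Euc2 d), v₁ - v⟫ + ⟪split2 d (ω : Euc2 d), v₂ - v⟫)
                / tRel d v v₁ v₂)
             ⟪split1 d (ω : Euc2 d), split2 d (ω : Euc2 d)⟫ *
          F (tV d v v₁ v₂ (ω : Euc2 d)) * G (tV₁ d v v₁ v₂ (ω : Euc2 d)) *
          H (tV₂ d v v₁ v₂ (ω : Euc2 d)) ∂σm)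
      = ∫⁻ v : Euc d, ∫⁻ v₁ : Euc d, ∫⁻ v₂ : Euc d, ∫⁻ ω : 𝕊,
          ENNReal.ofReal (tRel d v v₁ v₂ ^ γ₃) *
            b₃ ((⟪split1 d (ω : Euc2 d), v₁ - v⟫ + ⟪split2 d (ω : Euc2 d), v₂ - v⟫)
                  / tRel d v v₁ v₂)
               ⟪split1 d (ω : Euc2 d), split2 d (ω : Euc2 d)⟫ *
            F v * G v₁ * H v₂ ∂σm := by
  set W : ↥𝕊 × (Euc d × Euc d × Euc d) → ℝ≥0∞ := fun q =>
    ENNReal.ofReal (tRel d q.2.1 q.2.2.1 q.2.2.2 ^ γ₃) *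
      b₃ ((⟪split1 d (q.1 : Euc2 d), q.2.2.1 - q.2.1⟫
            + ⟪split2 d (q.1 : Euc2 d), q.2.2.2 - q.2.1⟫) / tRel d q.2.1 q.2.2.1 q.2.2.2)
        ⟪split1 d (q.1 : Euc2 d), split2 d (q.1 : Euc2 d)⟫ *
      F q.2.1 * G q.2.2.1 * H q.2.2.2 with hWdef
  have hW : Measurable W := by
    refine (((measurable_kern γ₃ b₃ hb₃).mul (hF.comp measurable_snd.fst)).mul
      (hG.comp measurable_snd.snd.fst)).mul (hH.comp measurable_snd.snd.snd)
  have hWΦ : Measurable (W ∘ tΦ d) := hW.comp measurable_tΦ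
  -- pointwise identity: gain integrand = W ∘ tΦ
  have hpt : ∀ (ω : ↥𝕊) (v v₁ v₂ : Euc d),
      ENNReal.ofReal (tRel d v v₁ v₂ ^ γ₃) *
          b₃ ((⟪split1 d (ω : Euc2 d), v₁ - v⟫ + ⟪split2 d (ω : Euc2 d), v₂ - v⟫)
                / tRel d v v₁ v₂)
             ⟪split1 d (ω : Euc2 d), split2 d (ω : Euc2 d)⟫ *
          F (tV d v v₁ v₂ (ω : Euc2 d)) * G (tV₁ d v v₁ v₂ (ω : Euc2 d)) *
          H (tV₂ d v v₁ v₂ (ω : Euc2 d))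
        = (W ∘ tΦ d) (ω, (v, v₁, v₂)) := by
    intro ω v v₁ v₂
    have hs := sphere_hs (d := d) ω
    have h1 := sphere_h1 (d := d) ω
    simp only [Function.comp_apply, tΦ, hWdef]
    have htm : tMap (ω : Euc2 d) (v, v₁, v₂)
        = (tV d v v₁ v₂ (ω : Euc2 d), tV₁ d v v₁ v₂ (ω : Euc2 d),
            tV₂ d v v₁ v₂ (ω : Euc2 d)) := rfl
    rw [htm]
    have hrel := tRel_star v v₁ v₂ (ω : Euc2 d) hs h1
    have hnum := inner_star_sum v v₁ v₂ (ω : Euc2 d) hs h1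
    simp only [hrel, hnum, neg_div, hb₃even]
  calc
    (∫⁻ v : Euc d, ∫⁻ v₁ : Euc d, ∫⁻ v₂ : Euc d, ∫⁻ ω : 𝕊,
        ENNReal.ofReal (tRel d v v₁ v₂ ^ γ₃) *
          b₃ ((⟪split1 d (ω : Euc2 d), v₁ - v⟫ + ⟪split2 d (ω : Euc2 d), v₂ - v⟫)
                / tRel d v v₁ v₂)
             ⟪split1 d (ω : Euc2 d), split2 d (ω : Euc2 d)⟫ *
          F (tV d v v₁ v₂ (ω : Euc2 d)) * G (tV₁ d v v₁ v₂ (ω : Euc2 d)) *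
          H (tV₂ d v v₁ v₂ (ω : Euc2 d)) ∂σm)
        = ∫⁻ v : Euc d, ∫⁻ v₁ : Euc d, ∫⁻ v₂ : Euc d, ∫⁻ ω : 𝕊,
            (W ∘ tΦ d) (ω, (v, v₁, v₂)) ∂σm :=
      lintegral_congr fun v => lintegral_congr fun v₁ => lintegral_congr fun v₂ =>
        lintegral_congr fun ω => hpt ω v v₁ v₂
    _ = ∫⁻ q, (W ∘ tΦ d) q ∂(Measure.prod σm volume) := nest _ hWΦ
    _ = ∫⁻ q, W q ∂(Measure.prod σm volume) :=
      tΦ_measurePreserving.lintegral_comp hW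
    _ = ∫⁻ v : Euc d, ∫⁻ v₁ : Euc d, ∫⁻ v₂ : Euc d, ∫⁻ ω : 𝕊,
          W (ω, (v, v₁, v₂)) ∂σm := (nest _ hW).symm
    _ = _ := rfl

end Main2

/-- **The `L¹` norm of the ternary gain operator equals the `L¹` norm of the ternary
loss operator**: integrating the ternary collision kernel
`|ũ|^{γ₃} b₃(ū·ω, ω₁·ω₂)` against `f(x,v*)g(x,v₁*)h(x,v₂*)` over
`ℝ^d_x × ℝ^d_v × ℝ^{2d}_{(v₁,v₂)} × S^{2d−1}` gives the same value as integrating it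
against `f(x,v)g(x,v₁)h(x,v₂)`.  The sphere `S^{2d-1}` carries its canonical surface
measure `volume.toSphere`. -/
theorem ternary_gain_L1_eq_loss_L1
    (d : ℕ) (hd : 2 ≤ d) (γ₃ : ℝ) (hγ₃l : -(2 * (d : ℝ)) + 1 < γ₃) (hγ₃u : γ₃ ≤ 1)
    (b₃ : ℝ → ℝ → ℝ≥0∞) (hb₃ : Measurable (Function.uncurry b₃))
    (hb₃even : ∀ z w : ℝ, b₃ (-z) w = b₃ z w)
    (f g h : Euc d → Euc d → ℝ≥0∞)
    (hf : Measurable (Function.uncurry f)) (hg : Measurable (Function.uncurry g))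
    (hh : Measurable (Function.uncurry h)) :
    (∫⁻ x : Euc d, ∫⁻ v : Euc d, ∫⁻ v₁ : Euc d, ∫⁻ v₂ : Euc d,
        ∫⁻ ω : sphere (0 : Euc2 d) 1,
        ENNReal.ofReal (tRel d v v₁ v₂ ^ γ₃) *
          b₃ ((⟪split1 d (ω : Euc2 d), v₁ - v⟫ + ⟪split2 d (ω : Euc2 d), v₂ - v⟫)
                / tRel d v v₁ v₂)
             ⟪split1 d (ω : Euc2 d), split2 d (ω : Euc2 d)⟫ *
          f x (tV d v v₁ v₂ (ω : Euc2 d)) * g x (tV₁ d v v₁ v₂ (ω : Euc2 d)) *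
          h x (tV₂ d v v₁ v₂ (ω : Euc2 d)) ∂volume.toSphere)
      = ∫⁻ x : Euc d, ∫⁻ v : Euc d, ∫⁻ v₁ : Euc d, ∫⁻ v₂ : Euc d,
          ∫⁻ ω : sphere (0 : Euc2 d) 1,
          ENNReal.ofReal (tRel d v v₁ v₂ ^ γ₃) *
            b₃ ((⟪split1 d (ω : Euc2 d), v₁ - v⟫ + ⟪split2 d (ω : Euc2 d), v₂ - v⟫)
                  / tRel d v v₁ v₂)
               ⟪split1 d (ω : Euc2 d), split2 d (ω : Euc2 d)⟫ *
            f x v * g x v₁ * h x v₂ ∂volume.toSphere := by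
  refine lintegral_congr fun x => ?_
  exact key γ₃ b₃ hb₃ hb₃even (f x) (g x) (h x)
    hf.of_uncurry_left hg.of_uncurry_left hh.of_uncurry_left
end
end

section
/- Let d ≥ 2, α, β > 0, γ₂ ∈ (−d+1, 1], and let b₂ : [−1,1] → [0,∞) be measurable with ‖b₂‖_{L¹(S^{d−1})} := ∫_{S^{d−1}} b₂(ν·ω) dσ(ω) < ∞ (this value being independent of the unit vector ν). There exists a constant C_d > 0 depending only on d such that: if f, g : [0,∞) × ℝ^d × ℝ^d → ℝ are measurable and satisfy |f(τ,y,w)| ≤ Λ_f e^{−α|y−τw|² − β|w|²} and |g(τ,y,w)| ≤ Λ_g e^{−α|y−τw|² − β|w|²} for all τ ≥ 0 and all (y,w), then for every t > 0 and every (x,v) ∈ ℝ^d × ℝ^d, ∫₀^t ∫_{ℝ^d} ∫_{S^{d−1}} |u|^{γ₂} b₂(û·ω) |f(τ, x+τv, v)| |g(τ, x+τv, v₁)| dσ(ω) dv₁ dτ ≤ C_d ‖b₂‖_{L¹(S^{d−1})} α^{−1/2} (β^{−d/2} + 1/(d+γ₂−1)) Λ_f Λ_g e^{−α|x|² − β|v|²},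 and the same bound holds with |f(τ, x+τv, v')| |g(τ, x+τv, v₁')| in place of |f(τ, x+τv, v)| |g(τ, x+τv, v₁)|. That is, the time integrals along free-transport characteristics of both the binary loss and the binary gain operators are bounded by a Maxwellian, uniformly in time. -/
open MeasureTheory Metric
open scoped RealInnerProductSpace ENNReal

noncomputable section

namespace BinaryMaxwellAux

/-- Key geometric inequality: if `a + b = u` and `‖a‖² + ‖b‖² = ‖u‖²`, then
`‖x - τa‖² + ‖x - τb‖² ≥ ‖x‖² + (⟪x, û⟫ - τ‖u‖)²`. -/
lemma geom_main {E : Type*} [NormedAddCommGroup E] [InnerProductSpace ℝ E]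
    (x u a b : E) (τ : ℝ) (hab : a + b = u) (hn : ‖a‖ ^ 2 + ‖b‖ ^ 2 = ‖u‖ ^ 2) :
    ‖x‖ ^ 2 + ((⟪x, ‖u‖⁻¹ • u⟫ : ℝ) - τ * ‖u‖) ^ 2 ≤ ‖x - τ • a‖ ^ 2 + ‖x - τ • b‖ ^ 2 := by
  have hsa : ‖τ • a‖ ^ 2 = τ ^ 2 * ‖a‖ ^ 2 := by
    rw [norm_smul, mul_pow, Real.norm_eq_abs, sq_abs]
  have hsb : ‖τ • b‖ ^ 2 = τ ^ 2 * ‖b‖ ^ 2 := by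
    rw [norm_smul, mul_pow, Real.norm_eq_abs, sq_abs]
  have hxa : ‖x - τ • a‖ ^ 2 = ‖x‖ ^ 2 - 2 * (τ * ⟪x, a⟫) + τ ^ 2 * ‖a‖ ^ 2 := by
    rw [norm_sub_sq_real, real_inner_smul_right, hsa]
  have hxb : ‖x - τ • b‖ ^ 2 = ‖x‖ ^ 2 - 2 * (τ * ⟪x, b⟫) + τ ^ 2 * ‖b‖ ^ 2 := by
    rw [norm_sub_sq_real, real_inner_smul_right, hsb]
  have hu : (⟪x, a⟫ : ℝ) + ⟪x, b⟫ = ⟪x, u⟫ := by rw [← hab, inner_add_right]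
  have hc1 : (⟪x, ‖u‖⁻¹ • u⟫ : ℝ) * ‖u‖ = ⟪x, u⟫ := by
    rcases eq_or_ne u 0 with h | h
    · simp [h]
    · rw [real_inner_smul_right]
      have hne : ‖u‖ ≠ 0 := norm_ne_zero_iff.2 h
      field_simp
  have hc2 : (⟪x, ‖u‖⁻¹ • u⟫ : ℝ) ^ 2 ≤ ‖x‖ ^ 2 := by
    have h1 : |(⟪x, ‖u‖⁻¹ • u⟫ : ℝ)| ≤ ‖x‖ * ‖‖u‖⁻¹ • u‖ := abs_real_inner_le_norm x _
    have h2 : ‖(‖u‖⁻¹ • u : E)‖ ≤ 1 := by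
      rcases eq_or_ne u 0 with h | h
      · simp [h]
      · rw [norm_smul, norm_inv, norm_norm, inv_mul_cancel₀ (norm_ne_zero_iff.2 h)]
    have h3 : |(⟪x, ‖u‖⁻¹ • u⟫ : ℝ)| ≤ ‖x‖ := by nlinarith [norm_nonneg x]
    calc (⟪x, ‖u‖⁻¹ • u⟫ : ℝ) ^ 2 = |(⟪x, ‖u‖⁻¹ • u⟫ : ℝ)| ^ 2 := (sq_abs _).symm
      _ ≤ ‖x‖ ^ 2 := by nlinarith [abs_nonneg (⟪x, ‖u‖⁻¹ • u⟫ : ℝ), norm_nonneg x]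
  have key : ((⟪x, ‖u‖⁻¹ • u⟫ : ℝ) - τ * ‖u‖) ^ 2
      = (⟪x, ‖u‖⁻¹ • u⟫ : ℝ) ^ 2 - 2 * τ * ((⟪x, ‖u‖⁻¹ • u⟫ : ℝ) * ‖u‖) + τ ^ 2 * ‖u‖ ^ 2 := by
    ring
  have hu' : τ * ⟪x, a⟫ + τ * ⟪x, b⟫ = τ * ⟪x, u⟫ := by rw [← mul_add, hu]
  have hn' : τ ^ 2 * ‖a‖ ^ 2 + τ ^ 2 * ‖b‖ ^ 2 = τ ^ 2 * ‖u‖ ^ 2 := by rw [← mul_add, hn]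
  rw [hxa, hxb, key, hc1]
  linarith [hc2, hu', hn']

/-- Energy conservation for the collision transformation. -/
lemma energy {E : Type*} [NormedAddCommGroup E] [InnerProductSpace ℝ E]
    (v v₁ ω : E) (hω : ‖ω‖ = 1) :
    ‖v + (⟪ω, v₁ - v⟫ : ℝ) • ω‖ ^ 2 + ‖v₁ - (⟪ω, v₁ - v⟫ : ℝ) • ω‖ ^ 2
      = ‖v‖ ^ 2 + ‖v₁‖ ^ 2 := by
  set p : ℝ := ⟪ω, v₁ - v⟫ with hp
  have hsp : ‖p • ω‖ ^ 2 = p ^ 2 := by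
    rw [norm_smul, mul_pow, Real.norm_eq_abs, sq_abs, hω, one_pow, mul_one]
  have h1 : ‖v + p • ω‖ ^ 2 = ‖v‖ ^ 2 + 2 * (p * ⟪v, ω⟫) + p ^ 2 := by
    rw [norm_add_sq_real, real_inner_smul_right, hsp]
  have h2 : ‖v₁ - p • ω‖ ^ 2 = ‖v₁‖ ^ 2 - 2 * (p * ⟪v₁, ω⟫) + p ^ 2 := by
    rw [norm_sub_sq_real, real_inner_smul_right, hsp]
  have h3 : p = ⟪v₁, ω⟫ - ⟪v, ω⟫ := by
    rw [hp, inner_sub_right, real_inner_comm ω v₁, real_inner_comm ω v]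
  rw [h1, h2, h3]
  ring

/-- One-dimensional Gaussian time integral bound. -/
lemma time_lintegral_le (α c r : ℝ) (hα : 0 < α) (hr : 0 < r) (t : ℝ) :
    ∫⁻ τ in Set.Ioc (0 : ℝ) t, ENNReal.ofReal (Real.exp (-α * (c - τ * r) ^ 2))
      ≤ ENNReal.ofReal (Real.sqrt (Real.pi / α) / r) := by
  have hrw : ∀ τ : ℝ, -α * (c - τ * r) ^ 2 = -α * (τ * r - c) ^ 2 := fun τ => by ring
  simp only [hrw]
  have h1 : Integrable (fun s : ℝ => Real.exp (-α * (s - c) ^ 2)) :=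
    (integrable_exp_neg_mul_sq hα).comp_sub_right c
  have hint : Integrable (fun τ : ℝ => Real.exp (-α * (τ * r - c) ^ 2)) :=
    h1.comp_mul_right' hr.ne'
  calc ∫⁻ τ in Set.Ioc (0 : ℝ) t, ENNReal.ofReal (Real.exp (-α * (τ * r - c) ^ 2))
      ≤ ∫⁻ τ : ℝ, ENNReal.ofReal (Real.exp (-α * (τ * r - c) ^ 2)) :=
        setLIntegral_le_lintegral _ _
    _ = ENNReal.ofReal (∫ τ : ℝ, Real.exp (-α * (τ * r - c) ^ 2)) :=
        (ofReal_integral_eq_lintegral_ofReal hint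
          (Filter.Eventually.of_forall fun τ => (Real.exp_pos _).le)).symm
    _ ≤ ENNReal.ofReal (Real.sqrt (Real.pi / α) / r) := by
        apply ENNReal.ofReal_le_ofReal
        have e1 : (∫ τ : ℝ, Real.exp (-α * (τ * r - c) ^ 2))
            = ∫ τ : ℝ, (fun s : ℝ => Real.exp (-α * (s - c) ^ 2)) (τ * r) := rfl
        rw [e1, MeasureTheory.Measure.integral_comp_mul_right
          (fun s : ℝ => Real.exp (-α * (s - c) ^ 2)) r]
        have e2 : (∫ s : ℝ, Real.exp (-α * (s - c) ^ 2))
            = ∫ s : ℝ, (fun y : ℝ => Real.exp (-α * y ^ 2)) (s - c) := rfl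
        rw [e2, MeasureTheory.integral_sub_right_eq_self (fun y : ℝ => Real.exp (-α * y ^ 2)) c,
          integral_gaussian, smul_eq_mul, abs_of_pos (inv_pos.2 hr)]
        exact le_of_eq (by ring)

/-- Gaussian lintegral on `Euc d`. -/
lemma gauss_lintegral (d : ℕ) (β : ℝ) (hβ : 0 < β) :
    ∫⁻ w : Euc d, ENNReal.ofReal (Real.exp (-β * ‖w‖ ^ 2))
      = ENNReal.ofReal ((Real.pi / β) ^ ((d : ℝ) / 2)) := by
  have hint : Integrable (fun w : Euc d => Real.exp (-β * ‖w‖ ^ 2)) := by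
    have h := (GaussianFourier.integrable_cexp_neg_mul_sq_norm_add (V := Euc d)
      (b := (β : ℂ)) (by simpa using hβ) 0 0).norm
    refine h.congr (Filter.Eventually.of_forall fun w => ?_)
    simp only [inner_zero_left, Complex.ofReal_zero, zero_mul, add_zero]
    rw [Complex.norm_exp,
      show -(β : ℂ) * (‖w‖ : ℂ) ^ 2 = ((-β * ‖w‖ ^ 2 : ℝ) : ℂ) by push_cast; ring,
      Complex.ofReal_re]
  rw [← ofReal_integral_eq_lintegral_ofReal hint
    (Filter.Eventually.of_forall fun w => (Real.exp_pos _).le)]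
  congr 1
  rw [GaussianFourier.integral_rexp_neg_mul_sq_norm (V := Euc d) hβ,
    finrank_euclideanSpace_fin]

/-- Polar-coordinates computation of `∫_{B(0,1)} ‖z‖^s dz` on `Euc d`. -/
lemma ball_lintegral (d : ℕ) (hd : 2 ≤ d) (s : ℝ) (hs : -(d : ℝ) < s) :
    ∫⁻ z in ball (0 : Euc d) 1, ENNReal.ofReal (‖z‖ ^ s)
      = ENNReal.ofReal ((d : ℝ) * (volume (ball (0 : Euc d) 1)).toReal / ((d : ℝ) + s)) := by
  classical
  haveI : Nontrivial (Euc d) := by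
    refine ⟨⟨EuclideanSpace.single (⟨0, by omega⟩ : Fin d) (1 : ℝ), 0, fun h => ?_⟩⟩
    have h1 := EuclideanSpace.norm_single (𝕜 := ℝ) (⟨0, by omega⟩ : Fin d) (1 : ℝ)
    rw [h] at h1
    simp at h1
  set n := Module.finrank ℝ (Euc d) with hn
  have hfin : n = d := finrank_euclideanSpace_fin
  set G : ℝ → ℝ≥0∞ :=
    (Set.Iio (1 : ℝ)).indicator (fun y => ENNReal.ofReal (y ^ s)) with hG
  have hGmeas : Measurable G :=
    Measurable.indicator ((measurable_id.pow_const s).ennreal_ofReal) measurableSet_Iio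
  have step1 : ∫⁻ z in ball (0 : Euc d) 1, ENNReal.ofReal (‖z‖ ^ s)
      = ∫⁻ z : Euc d, G ‖z‖ := by
    rw [← lintegral_indicator measurableSet_ball]
    refine lintegral_congr fun z => ?_
    by_cases hz : z ∈ ball (0 : Euc d) 1
    · rw [Set.indicator_of_mem hz, hG,
        Set.indicator_of_mem (show ‖z‖ ∈ Set.Iio (1:ℝ) from mem_ball_zero_iff.1 hz)]
    · rw [Set.indicator_of_notMem hz, hG, Set.indicator_of_notMem
        (show ‖z‖ ∉ Set.Iio (1:ℝ) from fun hc => hz (mem_ball_zero_iff.2 hc))]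
  have step2 : ∫⁻ (z : ({(0 : Euc d)}ᶜ : Set (Euc d))), G ‖(z : Euc d)‖
        ∂(volume.comap Subtype.val)
      = ∫⁻ z : Euc d, G ‖z‖ := by
    have h := setLIntegral_subtype (μ := (volume : Measure (Euc d)))
      ((measurableSet_singleton (0 : Euc d)).compl) Set.univ (fun z : Euc d => G ‖z‖)
    rw [Measure.restrict_univ, Set.image_univ, Subtype.range_coe] at h
    rw [h, restrict_compl_singleton]
  have hmp := Measure.measurePreserving_homeomorphUnitSphereProd (volume : Measure (Euc d))
  have hfm : Measurable (fun p : sphere (0 : Euc d) 1 × Set.Ioi (0 : ℝ) => G (p.2 : ℝ)) :=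
    hGmeas.comp (measurable_subtype_coe.comp measurable_snd)
  have step3 : ∫⁻ (z : ({(0 : Euc d)}ᶜ : Set (Euc d))), G ‖(z : Euc d)‖
        ∂(volume.comap Subtype.val)
      = ∫⁻ p : sphere (0 : Euc d) 1 × Set.Ioi (0 : ℝ), G (p.2 : ℝ)
        ∂((volume : Measure (Euc d)).toSphere.prod (Measure.volumeIoiPow (n - 1))) := by
    rw [← hmp.lintegral_comp hfm]
    refine lintegral_congr fun z => ?_
    rw [homeomorphUnitSphereProd_apply_snd_coe]
  have step4 : ∫⁻ p : sphere (0 : Euc d) 1 × Set.Ioi (0 : ℝ), G (p.2 : ℝ)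
        ∂((volume : Measure (Euc d)).toSphere.prod (Measure.volumeIoiPow (n - 1)))
      = ((volume : Measure (Euc d)).toSphere Set.univ) *
          ∫⁻ r : Set.Ioi (0 : ℝ), G (r : ℝ) ∂(Measure.volumeIoiPow (n - 1)) := by
    rw [lintegral_prod _ hfm.aemeasurable]
    show (∫⁻ _ : sphere (0 : Euc d) 1,
        (∫⁻ r : Set.Ioi (0 : ℝ), G (r : ℝ) ∂(Measure.volumeIoiPow (n - 1)))
        ∂(volume : Measure (Euc d)).toSphere) = _
    rw [lintegral_const, mul_comm]
  have hdens : Measurable (fun r : Set.Ioi (0 : ℝ) => ENNReal.ofReal ((r : ℝ) ^ (n - 1))) :=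
    (measurable_subtype_coe.pow_const _).ennreal_ofReal
  have step5 : ∫⁻ r : Set.Ioi (0 : ℝ), G (r : ℝ) ∂(Measure.volumeIoiPow (n - 1))
      = ∫⁻ r in Set.Ioi (0 : ℝ), ENNReal.ofReal (r ^ (n - 1)) * G r := by
    have hg' : Measurable (fun r : Set.Ioi (0 : ℝ) => G (r : ℝ)) :=
      hGmeas.comp measurable_subtype_coe
    rw [Measure.volumeIoiPow, lintegral_withDensity_eq_lintegral_mul _ hdens hg']
    have h := setLIntegral_subtype (μ := (volume : Measure ℝ))
      (measurableSet_Ioi : MeasurableSet (Set.Ioi (0:ℝ))) Set.univ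
      (fun r : ℝ => ENNReal.ofReal (r ^ (n - 1)) * G r)
    rw [Measure.restrict_univ, Set.image_univ, Subtype.range_coe] at h
    rw [← h]
    rfl
  have step6 : ∫⁻ r in Set.Ioi (0 : ℝ), ENNReal.ofReal (r ^ (n - 1)) * G r
      = ∫⁻ r in Set.Ioo (0 : ℝ) 1, ENNReal.ofReal (r ^ (n - 1)) * ENNReal.ofReal (r ^ s) := by
    have hpt : ∀ r : ℝ, ENNReal.ofReal (r ^ (n - 1)) * G r
        = Set.indicator (Set.Iio (1 : ℝ))
            (fun y => ENNReal.ofReal (y ^ (n - 1)) * ENNReal.ofReal (y ^ s)) r := by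
      intro r
      rw [hG]
      by_cases hr : r ∈ Set.Iio (1 : ℝ) <;> simp [hr]
    simp only [hpt]
    rw [lintegral_indicator measurableSet_Iio, Measure.restrict_restrict measurableSet_Iio,
      Set.Iio_inter_Ioi]
  have hq : -1 < (d : ℝ) - 1 + s := by linarith
  have hq1 : (0 : ℝ) < (d : ℝ) - 1 + s + 1 := by linarith
  have step7 : ∫⁻ r in Set.Ioo (0 : ℝ) 1, ENNReal.ofReal (r ^ (n - 1)) * ENNReal.ofReal (r ^ s)
      = ENNReal.ofReal (1 / ((d : ℝ) + s)) := by
    have hcast : ((n - 1 : ℕ) : ℝ) = (d : ℝ) - 1 := by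
      rw [hfin, Nat.cast_sub (by omega)]
      norm_num
    have hcong : ∀ᵐ r ∂(volume.restrict (Set.Ioo (0 : ℝ) 1)),
        ENNReal.ofReal (r ^ (n - 1)) * ENNReal.ofReal (r ^ s)
          = ENNReal.ofReal (r ^ ((d : ℝ) - 1 + s)) := by
      filter_upwards [ae_restrict_mem measurableSet_Ioo] with r hr
      rw [← ENNReal.ofReal_mul (pow_nonneg hr.1.le _)]
      congr 1
      rw [← Real.rpow_natCast r (n - 1), ← Real.rpow_add hr.1, hcast]
    rw [lintegral_congr_ae hcong]
    have hInt : IntegrableOn (fun r : ℝ => r ^ ((d : ℝ) - 1 + s)) (Set.Ioo (0 : ℝ) 1) :=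
      (intervalIntegral.intervalIntegrable_rpow' (a := 0) (b := 1) hq).1.mono_set
        Set.Ioo_subset_Ioc_self
    have hnn : 0 ≤ᵐ[volume.restrict (Set.Ioo (0 : ℝ) 1)]
        fun r : ℝ => r ^ ((d : ℝ) - 1 + s) := by
      filter_upwards [ae_restrict_mem measurableSet_Ioo] with r hr
      exact Real.rpow_nonneg hr.1.le _
    rw [← ofReal_integral_eq_lintegral_ofReal hInt hnn]
    congr 1
    rw [← MeasureTheory.integral_Ioc_eq_integral_Ioo,
      ← intervalIntegral.integral_of_le (by norm_num : (0 : ℝ) ≤ 1),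
      integral_rpow (Or.inl hq), Real.one_rpow, Real.zero_rpow hq1.ne']
    rw [show (d : ℝ) - 1 + s + 1 = (d : ℝ) + s by ring]
    norm_num
  have hballne : (volume (ball (0 : Euc d) 1)) ≠ ⊤ := measure_ball_lt_top.ne
  rw [step1, ← step2, step3, step4, step5, step6, step7, Measure.toSphere_apply_univ, ← hn, hfin]
  rw [show (d:ℝ) * (volume (ball (0 : Euc d) 1)).toReal / ((d:ℝ) + s)
      = (d:ℝ) * ((volume (ball (0 : Euc d) 1)).toReal * (1 / ((d:ℝ) + s))) by ring]
  rw [ENNReal.ofReal_mul (Nat.cast_nonneg d), ENNReal.ofReal_natCast,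
    ENNReal.ofReal_mul ENNReal.toReal_nonneg, ENNReal.ofReal_toReal hballne, mul_assoc]

/-- The pointwise majorant appearing in both the loss and gain bounds. -/
def Hfun (d : ℕ) (α β γ₂ : ℝ) (x v : Euc d) (τ : ℝ) (v₁ : Euc d) : ℝ :=
  ‖v₁ - v‖ ^ γ₂ * Real.exp (-β * ‖v₁‖ ^ 2
    - α * ((⟪x, ‖v₁ - v‖⁻¹ • (v₁ - v)⟫ : ℝ) - τ * ‖v₁ - v‖) ^ 2)

lemma measurable_Hfun (d : ℕ) (α β γ₂ : ℝ) (x v : Euc d) :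
    Measurable (fun p : ℝ × Euc d => ENNReal.ofReal (Hfun d α β γ₂ x v p.1 p.2)) := by
  have hm1 : Measurable fun p : ℝ × Euc d => ‖p.2 - v‖ :=
    (measurable_snd.sub measurable_const).norm
  have hinner : (fun p : ℝ × Euc d => (⟪x, ‖p.2 - v‖⁻¹ • (p.2 - v)⟫ : ℝ))
      = fun p : ℝ × Euc d => ‖p.2 - v‖⁻¹ * ⟪x, p.2 - v⟫ := by
    funext p
    rw [real_inner_smul_right]
  have hm4 : Measurable fun p : ℝ × Euc d => (⟪x, ‖p.2 - v‖⁻¹ • (p.2 - v)⟫ : ℝ) := by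
    rw [hinner]
    exact hm1.inv.mul
      ((continuous_const.inner (continuous_snd.sub continuous_const)).measurable)
  apply Measurable.ennreal_ofReal
  apply Measurable.mul (hm1.pow_const γ₂)
  apply Real.measurable_exp.comp
  apply Measurable.sub
  · exact (measurable_snd.norm.pow_const 2).const_mul (-β)
  · exact ((hm4.sub (measurable_fst.mul hm1)).pow_const 2).const_mul α

/-- Master estimate: the double integral of the majorant. -/
lemma master (d : ℕ) (hd : 2 ≤ d) (α β γ₂ : ℝ) (hα : 0 < α) (hβ : 0 < β)
    (hγ1 : -(d : ℝ) + 1 < γ₂) (hγ2 : γ₂ ≤ 1) (t : ℝ) (x v : Euc d) :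
    (∫⁻ τ in Set.Ioc (0 : ℝ) t, ∫⁻ v₁ : Euc d,
        ENNReal.ofReal (Hfun d α β γ₂ x v τ v₁))
      ≤ ENNReal.ofReal (Real.sqrt (Real.pi / α) *
          ((Real.pi / β) ^ ((d : ℝ) / 2) +
            (d : ℝ) * (volume (ball (0 : Euc d) 1)).toReal / ((d : ℝ) + γ₂ - 1))) := by
  haveI : Nontrivial (Euc d) := by
    refine ⟨⟨EuclideanSpace.single (⟨0, by omega⟩ : Fin d) (1 : ℝ), 0, fun h => ?_⟩⟩
    have h1 := EuclideanSpace.norm_single (𝕜 := ℝ) (⟨0, by omega⟩ : Fin d) (1 : ℝ)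
    rw [h] at h1
    simp at h1
  have hd2 : (2 : ℝ) ≤ (d : ℝ) := by exact_mod_cast hd
  have hdγ : (0 : ℝ) < (d : ℝ) + γ₂ - 1 := by linarith
  have hswap : (∫⁻ τ in Set.Ioc (0 : ℝ) t, ∫⁻ v₁ : Euc d,
        ENNReal.ofReal (Hfun d α β γ₂ x v τ v₁))
      = ∫⁻ v₁ : Euc d, ∫⁻ τ in Set.Ioc (0 : ℝ) t,
        ENNReal.ofReal (Hfun d α β γ₂ x v τ v₁) :=
    lintegral_lintegral_swap (measurable_Hfun d α β γ₂ x v).aemeasurable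
  rw [hswap]
  have key : ∀ v₁ : Euc d, v₁ ≠ v →
      (∫⁻ τ in Set.Ioc (0 : ℝ) t, ENNReal.ofReal (Hfun d α β γ₂ x v τ v₁))
        ≤ ENNReal.ofReal (Real.sqrt (Real.pi / α)) *
            ENNReal.ofReal (‖v₁ - v‖ ^ (γ₂ - 1) * Real.exp (-β * ‖v₁‖ ^ 2)) := by
    intro v₁ hv₁
    have hr : 0 < ‖v₁ - v‖ := norm_pos_iff.2 (sub_ne_zero.2 hv₁)
    have hsplit : ∀ τ : ℝ, Hfun d α β γ₂ x v τ v₁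
        = (‖v₁ - v‖ ^ γ₂ * Real.exp (-β * ‖v₁‖ ^ 2)) *
            Real.exp (-α * ((⟪x, ‖v₁ - v‖⁻¹ • (v₁ - v)⟫ : ℝ) - τ * ‖v₁ - v‖) ^ 2) := by
      intro τ
      unfold Hfun
      rw [mul_assoc, ← Real.exp_add]
      congr 2
      ring
    calc (∫⁻ τ in Set.Ioc (0 : ℝ) t, ENNReal.ofReal (Hfun d α β γ₂ x v τ v₁))
        = ENNReal.ofReal (‖v₁ - v‖ ^ γ₂ * Real.exp (-β * ‖v₁‖ ^ 2)) *
            ∫⁻ τ in Set.Ioc (0 : ℝ) t, ENNReal.ofReal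
              (Real.exp (-α * ((⟪x, ‖v₁ - v‖⁻¹ • (v₁ - v)⟫ : ℝ) - τ * ‖v₁ - v‖) ^ 2)) := by
          rw [← lintegral_const_mul' _ _ ENNReal.ofReal_ne_top]
          refine lintegral_congr fun τ => ?_
          rw [hsplit τ, ENNReal.ofReal_mul (by positivity)]
      _ ≤ ENNReal.ofReal (‖v₁ - v‖ ^ γ₂ * Real.exp (-β * ‖v₁‖ ^ 2)) *
            ENNReal.ofReal (Real.sqrt (Real.pi / α) / ‖v₁ - v‖) :=
          mul_le_mul_right (time_lintegral_le α _ _ hα hr t) _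
      _ = ENNReal.ofReal (Real.sqrt (Real.pi / α)) *
            ENNReal.ofReal (‖v₁ - v‖ ^ (γ₂ - 1) * Real.exp (-β * ‖v₁‖ ^ 2)) := by
          rw [← ENNReal.ofReal_mul (by positivity), ← ENNReal.ofReal_mul (Real.sqrt_nonneg _)]
          congr 1
          rw [Real.rpow_sub hr γ₂ 1, Real.rpow_one]
          field_simp
  have hae : ∀ᵐ v₁ : Euc d ∂volume, v₁ ≠ v := by
    rw [ae_iff]
    have hset : {v₁ : Euc d | ¬ v₁ ≠ v} = {v} := by ext v₁; simp
    rw [hset]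
    exact measure_singleton v
  calc (∫⁻ v₁ : Euc d, ∫⁻ τ in Set.Ioc (0 : ℝ) t, ENNReal.ofReal (Hfun d α β γ₂ x v τ v₁))
      ≤ ∫⁻ v₁ : Euc d, ENNReal.ofReal (Real.sqrt (Real.pi / α)) *
          ENNReal.ofReal (‖v₁ - v‖ ^ (γ₂ - 1) * Real.exp (-β * ‖v₁‖ ^ 2)) := by
        refine lintegral_mono_ae ?_
        filter_upwards [hae] with v₁ hv₁ using key v₁ hv₁
    _ = ENNReal.ofReal (Real.sqrt (Real.pi / α)) *
        ∫⁻ v₁ : Euc d, ENNReal.ofReal (‖v₁ - v‖ ^ (γ₂ - 1) * Real.exp (-β * ‖v₁‖ ^ 2)) :=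
        lintegral_const_mul' _ _ ENNReal.ofReal_ne_top
    _ ≤ ENNReal.ofReal (Real.sqrt (Real.pi / α)) *
        (ENNReal.ofReal ((d : ℝ) * (volume (ball (0 : Euc d) 1)).toReal / ((d : ℝ) + γ₂ - 1)) +
          ENNReal.ofReal ((Real.pi / β) ^ ((d : ℝ) / 2))) := by
        refine mul_le_mul_right ?_ _
        have hptw : ∀ v₁ : Euc d,
            ENNReal.ofReal (‖v₁ - v‖ ^ (γ₂ - 1) * Real.exp (-β * ‖v₁‖ ^ 2))
              ≤ Set.indicator (ball v 1)
                  (fun w => ENNReal.ofReal (‖w - v‖ ^ (γ₂ - 1))) v₁ +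
                ENNReal.ofReal (Real.exp (-β * ‖v₁‖ ^ 2)) := by
          intro v₁
          by_cases hm : v₁ ∈ ball v 1
          · rw [Set.indicator_of_mem hm]
            refine le_trans (le_trans (ENNReal.ofReal_le_ofReal ?_) le_rfl) le_self_add
            have he1 : Real.exp (-β * ‖v₁‖ ^ 2) ≤ 1 := by
              rw [Real.exp_le_one_iff]
              have : 0 ≤ β * ‖v₁‖ ^ 2 := by positivity
              linarith
            exact mul_le_of_le_one_right (Real.rpow_nonneg (norm_nonneg _) _) he1
          · rw [Set.indicator_of_notMem hm, zero_add]
            refine ENNReal.ofReal_le_ofReal ?_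
            have h1r : 1 ≤ ‖v₁ - v‖ := by
              by_contra hc
              exact hm (mem_ball_iff_norm.2 (by linarith))
            have : ‖v₁ - v‖ ^ (γ₂ - 1) ≤ 1 :=
              Real.rpow_le_one_of_one_le_of_nonpos h1r (by linarith)
            exact mul_le_of_le_one_left (Real.exp_pos _).le this
        calc ∫⁻ v₁ : Euc d, ENNReal.ofReal (‖v₁ - v‖ ^ (γ₂ - 1) * Real.exp (-β * ‖v₁‖ ^ 2))
            ≤ ∫⁻ v₁ : Euc d, (Set.indicator (ball v 1)
                  (fun w => ENNReal.ofReal (‖w - v‖ ^ (γ₂ - 1))) v₁ +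
                ENNReal.ofReal (Real.exp (-β * ‖v₁‖ ^ 2))) := lintegral_mono hptw
          _ = (∫⁻ v₁ in ball v 1, ENNReal.ofReal (‖v₁ - v‖ ^ (γ₂ - 1))) +
              ∫⁻ v₁ : Euc d, ENNReal.ofReal (Real.exp (-β * ‖v₁‖ ^ 2)) := by
              have hmInd : Measurable fun v₁ : Euc d => Set.indicator (ball v 1)
                  (fun w => ENNReal.ofReal (‖w - v‖ ^ (γ₂ - 1))) v₁ := by
                apply Measurable.indicator ?_ measurableSet_ball
                exact (((measurable_id.sub measurable_const).norm.pow_const _)).ennreal_ofReal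
              rw [lintegral_add_left hmInd, lintegral_indicator measurableSet_ball]
          _ ≤ ENNReal.ofReal ((d : ℝ) * (volume (ball (0 : Euc d) 1)).toReal /
                ((d : ℝ) + γ₂ - 1)) + ENNReal.ofReal ((Real.pi / β) ^ ((d : ℝ) / 2)) := by
              refine add_le_add ?_ (le_of_eq (gauss_lintegral d β hβ))
              have htrans : (∫⁻ v₁ in ball v 1, ENNReal.ofReal (‖v₁ - v‖ ^ (γ₂ - 1)))
                  = ∫⁻ z in ball (0 : Euc d) 1, ENNReal.ofReal (‖z‖ ^ (γ₂ - 1)) := by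
                have hFun : ∀ v₁ : Euc d,
                    Set.indicator (ball v 1)
                      (fun w => ENNReal.ofReal (‖w - v‖ ^ (γ₂ - 1))) v₁
                    = Set.indicator (ball (0 : Euc d) 1)
                      (fun z => ENNReal.ofReal (‖z‖ ^ (γ₂ - 1))) (v₁ + -v) := by
                  intro v₁
                  rw [← sub_eq_add_neg]
                  by_cases hm : v₁ ∈ ball v 1
                  · rw [Set.indicator_of_mem hm, Set.indicator_of_mem
                      (mem_ball_zero_iff.2 (mem_ball_iff_norm.1 hm))]
                  · rw [Set.indicator_of_notMem hm, Set.indicator_of_notMem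
                      (fun hc => hm (mem_ball_iff_norm.2 (mem_ball_zero_iff.1 hc)))]
                calc (∫⁻ v₁ in ball v 1, ENNReal.ofReal (‖v₁ - v‖ ^ (γ₂ - 1)))
                    = ∫⁻ v₁ : Euc d, Set.indicator (ball v 1)
                        (fun w => ENNReal.ofReal (‖w - v‖ ^ (γ₂ - 1))) v₁ :=
                      (lintegral_indicator measurableSet_ball _).symm
                  _ = ∫⁻ v₁ : Euc d, Set.indicator (ball (0 : Euc d) 1)
                        (fun z => ENNReal.ofReal (‖z‖ ^ (γ₂ - 1))) (v₁ + -v) := by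
                      simp only [hFun]
                  _ = ∫⁻ z : Euc d, Set.indicator (ball (0 : Euc d) 1)
                        (fun z => ENNReal.ofReal (‖z‖ ^ (γ₂ - 1))) z :=
                      lintegral_add_right_eq_self _ _
                  _ = ∫⁻ z in ball (0 : Euc d) 1, ENNReal.ofReal (‖z‖ ^ (γ₂ - 1)) :=
                      lintegral_indicator measurableSet_ball _
              rw [htrans, ball_lintegral d hd (γ₂ - 1) (by linarith)]
              rw [show (d : ℝ) + (γ₂ - 1) = (d : ℝ) + γ₂ - 1 by ring]
    _ ≤ ENNReal.ofReal (Real.sqrt (Real.pi / α) *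
          ((Real.pi / β) ^ ((d : ℝ) / 2) +
            (d : ℝ) * (volume (ball (0 : Euc d) 1)).toReal / ((d : ℝ) + γ₂ - 1))) := by
        rw [← ENNReal.ofReal_add (div_nonneg (by positivity) hdγ.le) (by positivity),
          ← ENNReal.ofReal_mul (Real.sqrt_nonneg _)]
        exact ENNReal.ofReal_le_ofReal (by rw [add_comm])

end BinaryMaxwellAux

open BinaryMaxwellAux

set_option maxHeartbeats 4000000 in
/-- **Global Maxwellian bound on the time average along free-transport characteristics
of the binary loss and gain operators:** there is `C_d > 0` depending only on `d` such
that, whenever the transported functions `f^#, g^#` are bounded by Maxwellians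
`Λ e^{−α|x|²−β|v|²}`, then for every `t > 0` and every `(x,v)`,
`∫₀^t L₂^#(f,g)(τ,x,v) dτ` and `∫₀^t G₂^#(f,g)(τ,x,v) dτ` are bounded by
`C_d ‖b₂‖ α^{−1/2} (β^{−d/2} + 1/(d+γ₂−1)) Λ_f Λ_g e^{−α|x|²−β|v|²}`. -/
theorem binary_time_average_maxwellian_bound (d : ℕ) (hd : 2 ≤ d) :
    ∃ C : ℝ, 0 < C ∧
      ∀ (α β γ₂ : ℝ) (b₂ : ℝ → ℝ) (B2n : ℝ)
        (f g : ℝ → Euc d → Euc d → ℝ) (Λf Λg : ℝ),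
        0 < α → 0 < β → -(d : ℝ) + 1 < γ₂ → γ₂ ≤ 1 →
        Measurable b₂ → (∀ z : ℝ, 0 ≤ b₂ z) →
        (∀ ν : Euc d, ‖ν‖ = 1 →
          (∫⁻ ω : sphere (0 : Euc d) 1,
              ENNReal.ofReal (b₂ ⟪ν, (ω : Euc d)⟫) ∂volume.toSphere)
            = ENNReal.ofReal B2n) →
        Measurable (fun q : ℝ × Euc d × Euc d => f q.1 q.2.1 q.2.2) →
        Measurable (fun q : ℝ × Euc d × Euc d => g q.1 q.2.1 q.2.2) →
        (∀ τ : ℝ, 0 ≤ τ → ∀ y w : Euc d,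
          |f τ y w| ≤ Λf * Real.exp (-α * ‖y - τ • w‖ ^ 2 - β * ‖w‖ ^ 2)) →
        (∀ τ : ℝ, 0 ≤ τ → ∀ y w : Euc d,
          |g τ y w| ≤ Λg * Real.exp (-α * ‖y - τ • w‖ ^ 2 - β * ‖w‖ ^ 2)) →
        ∀ t : ℝ, 0 < t → ∀ x v : Euc d,
          (∫⁻ τ in Set.Ioc (0 : ℝ) t, ∫⁻ v₁ : Euc d, ∫⁻ ω : sphere (0 : Euc d) 1,
              ENNReal.ofReal (‖v₁ - v‖ ^ γ₂) *
                ENNReal.ofReal (b₂ ⟪‖v₁ - v‖⁻¹ • (v₁ - v), (ω : Euc d)⟫) *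
                ENNReal.ofReal |f τ (x + τ • v) v| *
                ENNReal.ofReal |g τ (x + τ • v) v₁| ∂volume.toSphere)
            ≤ ENNReal.ofReal (C * B2n * α ^ (-(1 : ℝ) / 2) *
                (β ^ (-(d : ℝ) / 2) + 1 / ((d : ℝ) + γ₂ - 1)) * Λf * Λg *
                Real.exp (-α * ‖x‖ ^ 2 - β * ‖v‖ ^ 2)) ∧
          (∫⁻ τ in Set.Ioc (0 : ℝ) t, ∫⁻ v₁ : Euc d, ∫⁻ ω : sphere (0 : Euc d) 1,
              ENNReal.ofReal (‖v₁ - v‖ ^ γ₂) *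
                ENNReal.ofReal (b₂ ⟪‖v₁ - v‖⁻¹ • (v₁ - v), (ω : Euc d)⟫) *
                ENNReal.ofReal |f τ (x + τ • v) (v + ⟪(ω : Euc d), v₁ - v⟫ • (ω : Euc d))| *
                ENNReal.ofReal
                  |g τ (x + τ • v) (v₁ - ⟪(ω : Euc d), v₁ - v⟫ • (ω : Euc d))|
              ∂volume.toSphere)
            ≤ ENNReal.ofReal (C * B2n * α ^ (-(1 : ℝ) / 2) *
                (β ^ (-(d : ℝ) / 2) + 1 / ((d : ℝ) + γ₂ - 1)) * Λf * Λg *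
                Real.exp (-α * ‖x‖ ^ 2 - β * ‖v‖ ^ 2)) := by
  classical
  haveI : Nontrivial (Euc d) := by
    refine ⟨⟨EuclideanSpace.single (⟨0, by omega⟩ : Fin d) (1 : ℝ), 0, fun h => ?_⟩⟩
    have h1 := EuclideanSpace.norm_single (𝕜 := ℝ) (⟨0, by omega⟩ : Fin d) (1 : ℝ)
    rw [h] at h1
    simp at h1
  refine ⟨(Real.sqrt Real.pi + 1) *
      (Real.pi ^ ((d : ℝ) / 2) + (d : ℝ) * (volume (ball (0 : Euc d) 1)).toReal + 1),
    by positivity, ?_⟩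
  set Cd : ℝ := (Real.sqrt Real.pi + 1) *
      (Real.pi ^ ((d : ℝ) / 2) + (d : ℝ) * (volume (ball (0 : Euc d) 1)).toReal + 1) with hCd
  intro α β γ₂ b₂ B2n f g Λf Λg hα hβ hγ1 hγ2 hb₂m hb₂0 hB2n hfm hgm hf hg t ht x v
  have hd2 : (2 : ℝ) ≤ (d : ℝ) := by exact_mod_cast hd
  have hdγ : 0 < (d : ℝ) + γ₂ - 1 := by linarith
  have hΛf : 0 ≤ Λf := by
    have h := (abs_nonneg (f 0 0 0)).trans (hf 0 le_rfl 0 0)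
    nlinarith [Real.exp_pos (-α * ‖(0 : Euc d) - (0 : ℝ) • (0 : Euc d)‖ ^ 2
      - β * ‖(0 : Euc d)‖ ^ 2)]
  have hΛg : 0 ≤ Λg := by
    have h := (abs_nonneg (g 0 0 0)).trans (hg 0 le_rfl 0 0)
    nlinarith [Real.exp_pos (-α * ‖(0 : Euc d) - (0 : ℝ) • (0 : Euc d)‖ ^ 2
      - β * ‖(0 : Euc d)‖ ^ 2)]
  have hExp0 : (0 : ℝ) < Real.exp (-α * ‖x‖ ^ 2 - β * ‖v‖ ^ 2) := Real.exp_pos _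
  -- constant comparison
  have hvol0 : 0 ≤ (d : ℝ) * (volume (ball (0 : Euc d) 1)).toReal := by positivity
  have hconst : Real.sqrt (Real.pi / α) *
      ((Real.pi / β) ^ ((d : ℝ) / 2) +
        (d : ℝ) * (volume (ball (0 : Euc d) 1)).toReal / ((d : ℝ) + γ₂ - 1))
      ≤ Cd * α ^ (-(1 : ℝ) / 2) * (β ^ (-(d : ℝ) / 2) + 1 / ((d : ℝ) + γ₂ - 1)) := by
    have h1 : Real.sqrt (Real.pi / α) = Real.sqrt Real.pi * α ^ (-(1 : ℝ) / 2) := by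
      rw [Real.sqrt_div Real.pi_pos.le, show (-(1 : ℝ) / 2) = -(1 / 2) by norm_num,
        Real.rpow_neg hα.le, ← Real.sqrt_eq_rpow, div_eq_mul_inv]
    have h3 : (Real.pi / β) ^ ((d : ℝ) / 2)
        = Real.pi ^ ((d : ℝ) / 2) * β ^ (-(d : ℝ) / 2) := by
      rw [Real.div_rpow Real.pi_pos.le hβ.le, show (-(d : ℝ) / 2) = -((d : ℝ) / 2) by ring,
        Real.rpow_neg hβ.le, div_eq_mul_inv]
    have hβd : 0 ≤ β ^ (-(d : ℝ) / 2) := Real.rpow_nonneg hβ.le _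
    have hπd : 0 ≤ Real.pi ^ ((d : ℝ) / 2) := Real.rpow_nonneg Real.pi_pos.le _
    have hsπ : 0 ≤ Real.sqrt Real.pi := Real.sqrt_nonneg _
    have hα2 : 0 ≤ α ^ (-(1 : ℝ) / 2) := Real.rpow_nonneg hα.le _
    have hinv : 0 ≤ 1 / ((d : ℝ) + γ₂ - 1) := by positivity
    have e1 : Real.sqrt Real.pi * Real.pi ^ ((d : ℝ) / 2) ≤ Cd := by
      rw [hCd]; nlinarith
    have e2 : Real.sqrt Real.pi * ((d : ℝ) * (volume (ball (0 : Euc d) 1)).toReal) ≤ Cd := by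
      rw [hCd]; nlinarith
    have key : Real.sqrt Real.pi *
        ((Real.pi ^ ((d : ℝ) / 2) * β ^ (-(d : ℝ) / 2)) +
          (d : ℝ) * (volume (ball (0 : Euc d) 1)).toReal / ((d : ℝ) + γ₂ - 1))
        ≤ Cd * (β ^ (-(d : ℝ) / 2) + 1 / ((d : ℝ) + γ₂ - 1)) := by
      rw [div_eq_mul_one_div ((d : ℝ) * (volume (ball (0 : Euc d) 1)).toReal)]
      calc Real.sqrt Real.pi *
          ((Real.pi ^ ((d : ℝ) / 2) * β ^ (-(d : ℝ) / 2)) +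
            (d : ℝ) * (volume (ball (0 : Euc d) 1)).toReal * (1 / ((d : ℝ) + γ₂ - 1)))
          = (Real.sqrt Real.pi * Real.pi ^ ((d : ℝ) / 2)) * β ^ (-(d : ℝ) / 2) +
            (Real.sqrt Real.pi * ((d : ℝ) * (volume (ball (0 : Euc d) 1)).toReal)) *
              (1 / ((d : ℝ) + γ₂ - 1)) := by ring
        _ ≤ Cd * β ^ (-(d : ℝ) / 2) + Cd * (1 / ((d : ℝ) + γ₂ - 1)) :=
            add_le_add (mul_le_mul_of_nonneg_right e1 hβd)
              (mul_le_mul_of_nonneg_right e2 hinv)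
        _ = Cd * (β ^ (-(d : ℝ) / 2) + 1 / ((d : ℝ) + γ₂ - 1)) := by ring
    calc Real.sqrt (Real.pi / α) *
        ((Real.pi / β) ^ ((d : ℝ) / 2) +
          (d : ℝ) * (volume (ball (0 : Euc d) 1)).toReal / ((d : ℝ) + γ₂ - 1))
        = α ^ (-(1 : ℝ) / 2) * (Real.sqrt Real.pi *
            ((Real.pi ^ ((d : ℝ) / 2) * β ^ (-(d : ℝ) / 2)) +
              (d : ℝ) * (volume (ball (0 : Euc d) 1)).toReal / ((d : ℝ) + γ₂ - 1))) := by
          rw [h1, h3]; ring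
      _ ≤ α ^ (-(1 : ℝ) / 2) * (Cd * (β ^ (-(d : ℝ) / 2) + 1 / ((d : ℝ) + γ₂ - 1))) :=
          mul_le_mul_of_nonneg_left key hα2
      _ = Cd * α ^ (-(1 : ℝ) / 2) * (β ^ (-(d : ℝ) / 2) + 1 / ((d : ℝ) + γ₂ - 1)) := by ring
  have hmaster := master d hd α β γ₂ hα hβ hγ1 hγ2 t x v
  have hae : ∀ᵐ v₁ : Euc d ∂volume, v₁ ≠ v := by
    rw [ae_iff]
    have hset : {v₁ : Euc d | ¬ v₁ ≠ v} = {v} := by ext v₁; simp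
    rw [hset]
    exact measure_singleton v
  have hPDne : ENNReal.ofReal B2n *
      ENNReal.ofReal (Λf * Λg * Real.exp (-α * ‖x‖ ^ 2 - β * ‖v‖ ^ 2)) ≠ ⊤ :=
    ENNReal.mul_ne_top ENNReal.ofReal_ne_top ENNReal.ofReal_ne_top
  -- common reduction
  have hreduce : ∀ K : ℝ → Euc d → (sphere (0 : Euc d) 1) → ℝ≥0∞,
      (∀ τ, τ ∈ Set.Ioc (0 : ℝ) t → ∀ v₁ : Euc d, v₁ ≠ v →
        (∫⁻ ω : sphere (0 : Euc d) 1, K τ v₁ ω ∂volume.toSphere)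
          ≤ (ENNReal.ofReal B2n *
              ENNReal.ofReal (Λf * Λg * Real.exp (-α * ‖x‖ ^ 2 - β * ‖v‖ ^ 2))) *
            ENNReal.ofReal (Hfun d α β γ₂ x v τ v₁)) →
      (∫⁻ τ in Set.Ioc (0 : ℝ) t, ∫⁻ v₁ : Euc d,
          ∫⁻ ω : sphere (0 : Euc d) 1, K τ v₁ ω ∂volume.toSphere)
        ≤ ENNReal.ofReal (Cd * B2n * α ^ (-(1 : ℝ) / 2) *
            (β ^ (-(d : ℝ) / 2) + 1 / ((d : ℝ) + γ₂ - 1)) * Λf * Λg *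
            Real.exp (-α * ‖x‖ ^ 2 - β * ‖v‖ ^ 2)) := by
    intro K hK
    have step : (∫⁻ τ in Set.Ioc (0 : ℝ) t, ∫⁻ v₁ : Euc d,
          ∫⁻ ω : sphere (0 : Euc d) 1, K τ v₁ ω ∂volume.toSphere)
        ≤ (ENNReal.ofReal B2n *
            ENNReal.ofReal (Λf * Λg * Real.exp (-α * ‖x‖ ^ 2 - β * ‖v‖ ^ 2))) *
          ∫⁻ τ in Set.Ioc (0 : ℝ) t, ∫⁻ v₁ : Euc d,
            ENNReal.ofReal (Hfun d α β γ₂ x v τ v₁) := by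
      rw [← lintegral_const_mul' _ _ hPDne]
      refine lintegral_mono_ae ?_
      filter_upwards [ae_restrict_mem measurableSet_Ioc] with τ hτ
      rw [← lintegral_const_mul' _ _ hPDne]
      refine lintegral_mono_ae ?_
      filter_upwards [hae] with v₁ hv₁ using hK τ hτ v₁ hv₁
    rcases le_or_gt B2n 0 with hB | hB
    · refine step.trans ?_
      have hP0 : ENNReal.ofReal B2n = 0 := ENNReal.ofReal_eq_zero.2 hB
      rw [hP0, zero_mul, zero_mul]
      exact zero_le
    · refine step.trans ?_
      calc (ENNReal.ofReal B2n *
            ENNReal.ofReal (Λf * Λg * Real.exp (-α * ‖x‖ ^ 2 - β * ‖v‖ ^ 2))) *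
          ∫⁻ τ in Set.Ioc (0 : ℝ) t, ∫⁻ v₁ : Euc d,
            ENNReal.ofReal (Hfun d α β γ₂ x v τ v₁)
          ≤ (ENNReal.ofReal B2n *
              ENNReal.ofReal (Λf * Λg * Real.exp (-α * ‖x‖ ^ 2 - β * ‖v‖ ^ 2))) *
            ENNReal.ofReal (Real.sqrt (Real.pi / α) *
              ((Real.pi / β) ^ ((d : ℝ) / 2) +
                (d : ℝ) * (volume (ball (0 : Euc d) 1)).toReal / ((d : ℝ) + γ₂ - 1))) :=
            mul_le_mul_right hmaster _
        _ = ENNReal.ofReal (B2n * (Λf * Λg * Real.exp (-α * ‖x‖ ^ 2 - β * ‖v‖ ^ 2)) *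
              (Real.sqrt (Real.pi / α) *
                ((Real.pi / β) ^ ((d : ℝ) / 2) +
                  (d : ℝ) * (volume (ball (0 : Euc d) 1)).toReal / ((d : ℝ) + γ₂ - 1)))) := by
            have hYnn : (0:ℝ) ≤ Λf * Λg * Real.exp (-α * ‖x‖ ^ 2 - β * ‖v‖ ^ 2) := by
              positivity
            rw [ENNReal.ofReal_mul (mul_nonneg hB.le hYnn), ENNReal.ofReal_mul hB.le]
        _ ≤ ENNReal.ofReal (Cd * B2n * α ^ (-(1 : ℝ) / 2) *
              (β ^ (-(d : ℝ) / 2) + 1 / ((d : ℝ) + γ₂ - 1)) * Λf * Λg *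
              Real.exp (-α * ‖x‖ ^ 2 - β * ‖v‖ ^ 2)) := by
            refine ENNReal.ofReal_le_ofReal ?_
            have hnn : 0 ≤ B2n * (Λf * Λg * Real.exp (-α * ‖x‖ ^ 2 - β * ‖v‖ ^ 2)) := by
              positivity
            calc B2n * (Λf * Λg * Real.exp (-α * ‖x‖ ^ 2 - β * ‖v‖ ^ 2)) *
                (Real.sqrt (Real.pi / α) *
                  ((Real.pi / β) ^ ((d : ℝ) / 2) +
                    (d : ℝ) * (volume (ball (0 : Euc d) 1)).toReal / ((d : ℝ) + γ₂ - 1)))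
                ≤ B2n * (Λf * Λg * Real.exp (-α * ‖x‖ ^ 2 - β * ‖v‖ ^ 2)) *
                  (Cd * α ^ (-(1 : ℝ) / 2) *
                    (β ^ (-(d : ℝ) / 2) + 1 / ((d : ℝ) + γ₂ - 1))) :=
                  mul_le_mul_of_nonneg_left hconst hnn
              _ = Cd * B2n * α ^ (-(1 : ℝ) / 2) *
                  (β ^ (-(d : ℝ) / 2) + 1 / ((d : ℝ) + γ₂ - 1)) * Λf * Λg *
                  Real.exp (-α * ‖x‖ ^ 2 - β * ‖v‖ ^ 2) := by ring
  constructor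
  · -- loss term
    refine hreduce _ ?_
    intro τ hτ v₁ hv₁
    have hτ0 : (0 : ℝ) ≤ τ := hτ.1.le
    have hr : 0 < ‖v₁ - v‖ := norm_pos_iff.2 (sub_ne_zero.2 hv₁)
    have hν : ‖(‖v₁ - v‖⁻¹ • (v₁ - v) : Euc d)‖ = 1 := by
      rw [norm_smul, norm_inv, norm_norm, inv_mul_cancel₀ hr.ne']
    have hfb := hf τ hτ0 (x + τ • v) v
    rw [add_sub_cancel_right] at hfb
    have hgb := hg τ hτ0 (x + τ • v) v₁
    have hxw : x + τ • v - τ • v₁ = x - τ • (v₁ - v) := by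
      module
    rw [hxw] at hgb
    have hgeom : ((⟪x, ‖v₁ - v‖⁻¹ • (v₁ - v)⟫ : ℝ) - τ * ‖v₁ - v‖) ^ 2
        ≤ ‖x - τ • (v₁ - v)‖ ^ 2 := by
      have h := geom_main x (v₁ - v) (v₁ - v) 0 τ (add_zero _) (by simp)
      simp only [smul_zero, sub_zero] at h
      linarith
    have hgb2 : |g τ (x + τ • v) v₁|
        ≤ Λg * Real.exp (-β * ‖v₁‖ ^ 2
            - α * ((⟪x, ‖v₁ - v‖⁻¹ • (v₁ - v)⟫ : ℝ) - τ * ‖v₁ - v‖) ^ 2) := by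
      refine hgb.trans (mul_le_mul_of_nonneg_left (Real.exp_le_exp.2 ?_) hΛg)
      have h := mul_le_mul_of_nonneg_left hgeom hα.le
      linarith
    have hreal : ‖v₁ - v‖ ^ γ₂ * |f τ (x + τ • v) v| * |g τ (x + τ • v) v₁|
        ≤ (Λf * Λg * Real.exp (-α * ‖x‖ ^ 2 - β * ‖v‖ ^ 2)) * Hfun d α β γ₂ x v τ v₁ := by
      calc ‖v₁ - v‖ ^ γ₂ * |f τ (x + τ • v) v| * |g τ (x + τ • v) v₁|
          ≤ ‖v₁ - v‖ ^ γ₂ * (Λf * Real.exp (-α * ‖x‖ ^ 2 - β * ‖v‖ ^ 2)) *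
            (Λg * Real.exp (-β * ‖v₁‖ ^ 2
              - α * ((⟪x, ‖v₁ - v‖⁻¹ • (v₁ - v)⟫ : ℝ) - τ * ‖v₁ - v‖) ^ 2)) := by
            apply mul_le_mul
            · exact mul_le_mul_of_nonneg_left hfb (Real.rpow_nonneg (norm_nonneg _) _)
            · exact hgb2
            · exact abs_nonneg _
            · have : 0 ≤ ‖v₁ - v‖ ^ γ₂ := Real.rpow_nonneg (norm_nonneg _) _
              positivity
        _ = (Λf * Λg * Real.exp (-α * ‖x‖ ^ 2 - β * ‖v‖ ^ 2)) *
            Hfun d α β γ₂ x v τ v₁ := by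
            unfold Hfun; ring
    calc (∫⁻ ω : sphere (0 : Euc d) 1,
          ENNReal.ofReal (‖v₁ - v‖ ^ γ₂) *
            ENNReal.ofReal (b₂ ⟪‖v₁ - v‖⁻¹ • (v₁ - v), (ω : Euc d)⟫) *
            ENNReal.ofReal |f τ (x + τ • v) v| *
            ENNReal.ofReal |g τ (x + τ • v) v₁| ∂volume.toSphere)
        = ∫⁻ ω : sphere (0 : Euc d) 1,
            ENNReal.ofReal (b₂ ⟪‖v₁ - v‖⁻¹ • (v₁ - v), (ω : Euc d)⟫) *
              (ENNReal.ofReal (‖v₁ - v‖ ^ γ₂) * ENNReal.ofReal |f τ (x + τ • v) v| *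
                ENNReal.ofReal |g τ (x + τ • v) v₁|) ∂volume.toSphere := by
          refine lintegral_congr fun ω => ?_; ring
      _ = ENNReal.ofReal B2n * (ENNReal.ofReal (‖v₁ - v‖ ^ γ₂) *
            ENNReal.ofReal |f τ (x + τ • v) v| * ENNReal.ofReal |g τ (x + τ • v) v₁|) := by
          rw [lintegral_mul_const' _ _ (ENNReal.mul_ne_top
            (ENNReal.mul_ne_top ENNReal.ofReal_ne_top ENNReal.ofReal_ne_top)
            ENNReal.ofReal_ne_top), hB2n _ hν]
      _ ≤ ENNReal.ofReal B2n *
            (ENNReal.ofReal (Λf * Λg * Real.exp (-α * ‖x‖ ^ 2 - β * ‖v‖ ^ 2)) *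
              ENNReal.ofReal (Hfun d α β γ₂ x v τ v₁)) := by
          refine mul_le_mul_right ?_ _
          rw [← ENNReal.ofReal_mul (Real.rpow_nonneg (norm_nonneg _) _),
            ← ENNReal.ofReal_mul (mul_nonneg (Real.rpow_nonneg (norm_nonneg _) _)
              (abs_nonneg _)),
            ← ENNReal.ofReal_mul (by positivity)]
          exact ENNReal.ofReal_le_ofReal hreal
      _ = (ENNReal.ofReal B2n *
            ENNReal.ofReal (Λf * Λg * Real.exp (-α * ‖x‖ ^ 2 - β * ‖v‖ ^ 2))) *
          ENNReal.ofReal (Hfun d α β γ₂ x v τ v₁) := by ring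
  · -- gain term
    refine hreduce _ ?_
    intro τ hτ v₁ hv₁
    have hτ0 : (0 : ℝ) ≤ τ := hτ.1.le
    have hr : 0 < ‖v₁ - v‖ := norm_pos_iff.2 (sub_ne_zero.2 hv₁)
    have hν : ‖(‖v₁ - v‖⁻¹ • (v₁ - v) : Euc d)‖ = 1 := by
      rw [norm_smul, norm_inv, norm_norm, inv_mul_cancel₀ hr.ne']
    have hptw : ∀ ω : sphere (0 : Euc d) 1,
        ENNReal.ofReal (‖v₁ - v‖ ^ γ₂) *
          ENNReal.ofReal (b₂ ⟪‖v₁ - v‖⁻¹ • (v₁ - v), (ω : Euc d)⟫) *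
          ENNReal.ofReal |f τ (x + τ • v) (v + ⟪(ω : Euc d), v₁ - v⟫ • (ω : Euc d))| *
          ENNReal.ofReal |g τ (x + τ • v) (v₁ - ⟪(ω : Euc d), v₁ - v⟫ • (ω : Euc d))|
        ≤ ENNReal.ofReal (b₂ ⟪‖v₁ - v‖⁻¹ • (v₁ - v), (ω : Euc d)⟫) *
            (ENNReal.ofReal (Λf * Λg * Real.exp (-α * ‖x‖ ^ 2 - β * ‖v‖ ^ 2)) *
              ENNReal.ofReal (Hfun d α β γ₂ x v τ v₁)) := by
      intro ω
      have hω : ‖(ω : Euc d)‖ = 1 := mem_sphere_zero_iff_norm.1 ω.2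
      set p : ℝ := ⟪(ω : Euc d), v₁ - v⟫ with hp
      have hfb := hf τ hτ0 (x + τ • v) (v + p • (ω : Euc d))
      have hxf : x + τ • v - τ • (v + p • (ω : Euc d)) = x - τ • (p • (ω : Euc d)) := by
        module
      rw [hxf] at hfb
      have hgb := hg τ hτ0 (x + τ • v) (v₁ - p • (ω : Euc d))
      have hxg : x + τ • v - τ • (v₁ - p • (ω : Euc d))
          = x - τ • (v₁ - v - p • (ω : Euc d)) := by
        module
      rw [hxg] at hgb
      have hnsum : ‖(p • (ω : Euc d) : Euc d)‖ ^ 2 + ‖v₁ - v - p • (ω : Euc d)‖ ^ 2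
          = ‖v₁ - v‖ ^ 2 := by
        have hsp : ‖(p • (ω : Euc d) : Euc d)‖ ^ 2 = p ^ 2 := by
          rw [norm_smul, mul_pow, Real.norm_eq_abs, sq_abs, hω, one_pow, mul_one]
        have hb : ‖v₁ - v - p • (ω : Euc d)‖ ^ 2
            = ‖v₁ - v‖ ^ 2 - 2 * (p * ⟪v₁ - v, (ω : Euc d)⟫) + p ^ 2 := by
          rw [norm_sub_sq_real, real_inner_smul_right, hsp]
        have hip : (⟪v₁ - v, (ω : Euc d)⟫ : ℝ) = p := by
          rw [hp, real_inner_comm]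
        rw [hsp, hb, hip]
        ring
      have hgeom := geom_main x (v₁ - v) (p • (ω : Euc d)) (v₁ - v - p • (ω : Euc d)) τ
        (by abel) hnsum
      have henergy := energy v v₁ (ω : Euc d) hω
      rw [← hp] at henergy
      have hreal : ‖v₁ - v‖ ^ γ₂ * |f τ (x + τ • v) (v + p • (ω : Euc d))| *
          |g τ (x + τ • v) (v₁ - p • (ω : Euc d))|
          ≤ (Λf * Λg * Real.exp (-α * ‖x‖ ^ 2 - β * ‖v‖ ^ 2)) *
            Hfun d α β γ₂ x v τ v₁ := by
        have hrp : (0:ℝ) ≤ ‖v₁ - v‖ ^ γ₂ := Real.rpow_nonneg (norm_nonneg _) _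
        calc ‖v₁ - v‖ ^ γ₂ * |f τ (x + τ • v) (v + p • (ω : Euc d))| *
              |g τ (x + τ • v) (v₁ - p • (ω : Euc d))|
            ≤ ‖v₁ - v‖ ^ γ₂ *
                (Λf * Real.exp (-α * ‖x - τ • (p • (ω : Euc d))‖ ^ 2
                  - β * ‖v + p • (ω : Euc d)‖ ^ 2)) *
                (Λg * Real.exp (-α * ‖x - τ • (v₁ - v - p • (ω : Euc d))‖ ^ 2
                  - β * ‖v₁ - p • (ω : Euc d)‖ ^ 2)) := by
              apply mul_le_mul
              · exact mul_le_mul_of_nonneg_left hfb hrp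
              · exact hgb
              · exact abs_nonneg _
              · positivity
          _ = (Λf * Λg * ‖v₁ - v‖ ^ γ₂) *
              (Real.exp (-α * ‖x - τ • (p • (ω : Euc d))‖ ^ 2
                  - β * ‖v + p • (ω : Euc d)‖ ^ 2) *
                Real.exp (-α * ‖x - τ • (v₁ - v - p • (ω : Euc d))‖ ^ 2
                  - β * ‖v₁ - p • (ω : Euc d)‖ ^ 2)) := by ring
          _ = (Λf * Λg * ‖v₁ - v‖ ^ γ₂) *
              Real.exp ((-α * ‖x - τ • (p • (ω : Euc d))‖ ^ 2
                  - β * ‖v + p • (ω : Euc d)‖ ^ 2) +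
                (-α * ‖x - τ • (v₁ - v - p • (ω : Euc d))‖ ^ 2
                  - β * ‖v₁ - p • (ω : Euc d)‖ ^ 2)) := by rw [Real.exp_add]
          _ ≤ (Λf * Λg * ‖v₁ - v‖ ^ γ₂) *
              Real.exp ((-α * ‖x‖ ^ 2 - β * ‖v‖ ^ 2) +
                (-β * ‖v₁‖ ^ 2
                  - α * ((⟪x, ‖v₁ - v‖⁻¹ • (v₁ - v)⟫ : ℝ) - τ * ‖v₁ - v‖) ^ 2)) := by
              refine mul_le_mul_of_nonneg_left (Real.exp_le_exp.2 ?_) (by positivity)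
              have h1 := mul_le_mul_of_nonneg_left hgeom hα.le
              have h2 : β * (‖v + p • (ω : Euc d)‖ ^ 2 + ‖v₁ - p • (ω : Euc d)‖ ^ 2)
                  = β * (‖v‖ ^ 2 + ‖v₁‖ ^ 2) := by rw [henergy]
              nlinarith [h1, h2]
          _ = (Λf * Λg * Real.exp (-α * ‖x‖ ^ 2 - β * ‖v‖ ^ 2)) *
              Hfun d α β γ₂ x v τ v₁ := by
              rw [Real.exp_add]; unfold Hfun; ring
      have hc1 : ENNReal.ofReal (‖v₁ - v‖ ^ γ₂) *
          ENNReal.ofReal (b₂ ⟪‖v₁ - v‖⁻¹ • (v₁ - v), (ω : Euc d)⟫) *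
          ENNReal.ofReal |f τ (x + τ • v) (v + p • (ω : Euc d))| *
          ENNReal.ofReal |g τ (x + τ • v) (v₁ - p • (ω : Euc d))|
          = ENNReal.ofReal (b₂ ⟪‖v₁ - v‖⁻¹ • (v₁ - v), (ω : Euc d)⟫) *
            (ENNReal.ofReal (‖v₁ - v‖ ^ γ₂) *
              ENNReal.ofReal |f τ (x + τ • v) (v + p • (ω : Euc d))| *
              ENNReal.ofReal |g τ (x + τ • v) (v₁ - p • (ω : Euc d))|) := by ring
      rw [hc1]
      refine mul_le_mul_right ?_ _
      rw [← ENNReal.ofReal_mul (Real.rpow_nonneg (norm_nonneg _) _),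
        ← ENNReal.ofReal_mul (mul_nonneg (Real.rpow_nonneg (norm_nonneg _) _) (abs_nonneg _)),
        ← ENNReal.ofReal_mul (by positivity)]
      exact ENNReal.ofReal_le_ofReal hreal
    calc (∫⁻ ω : sphere (0 : Euc d) 1,
          ENNReal.ofReal (‖v₁ - v‖ ^ γ₂) *
            ENNReal.ofReal (b₂ ⟪‖v₁ - v‖⁻¹ • (v₁ - v), (ω : Euc d)⟫) *
            ENNReal.ofReal |f τ (x + τ • v) (v + ⟪(ω : Euc d), v₁ - v⟫ • (ω : Euc d))| *
            ENNReal.ofReal |g τ (x + τ • v) (v₁ - ⟪(ω : Euc d), v₁ - v⟫ • (ω : Euc d))|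
            ∂volume.toSphere)
        ≤ ∫⁻ ω : sphere (0 : Euc d) 1,
            ENNReal.ofReal (b₂ ⟪‖v₁ - v‖⁻¹ • (v₁ - v), (ω : Euc d)⟫) *
              (ENNReal.ofReal (Λf * Λg * Real.exp (-α * ‖x‖ ^ 2 - β * ‖v‖ ^ 2)) *
                ENNReal.ofReal (Hfun d α β γ₂ x v τ v₁)) ∂volume.toSphere :=
          lintegral_mono hptw
      _ = ENNReal.ofReal B2n *
            (ENNReal.ofReal (Λf * Λg * Real.exp (-α * ‖x‖ ^ 2 - β * ‖v‖ ^ 2)) *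
              ENNReal.ofReal (Hfun d α β γ₂ x v τ v₁)) := by
          rw [lintegral_mul_const' _ _ (ENNReal.mul_ne_top ENNReal.ofReal_ne_top
            ENNReal.ofReal_ne_top), hB2n _ hν]
      _ = (ENNReal.ofReal B2n *
            ENNReal.ofReal (Λf * Λg * Real.exp (-α * ‖x‖ ^ 2 - β * ‖v‖ ^ 2))) *
          ENNReal.ofReal (Hfun d α β γ₂ x v τ v₁) := by ring
end
end
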